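/- arXiv:2111.04806 — 5 statements merged into one kernel-verified Lean document; each statement's English description precedes it below -/
import Mathlib

section
/- Let N ≥ 2 be an integer, m > 1, σ ∈ (−2, 0) and 1 < p < p_c(σ) := 1 − σ(m−1)/2. Let (X, Y, Z) : [η₀, b) → ℝ³ be a differentiable solution of the system Ẋ = X[(m−1)Y − 2X], Ẏ = −Y² − (β/α)Y + X − N X Y − X Z, Ż = Z[(p−1)Y + σX], with X(η) > 0 and Z(η) > 0 for all η ∈ [η₀, b). If (m−1)Y(η₀) − 2X(η₀) < 0 and (p−1)Y(η₀) + σX(η₀) < 0, then (m−1)Y(η) − 2X(η) < 0 and (p−1)Y(η) + σX(η) < 0 for all η ∈ [η₀, b); consequently X and Z are strictly decreasing on [η₀, b). -/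
open Real Filter Set Topology

/-- Barrier lemma: if `F a < 0` and whenever `F η = 0` (inside the interval)
the derivative of `F` is negative, then `F` stays negative on `[a, b)`. -/
lemma barrier_neg {a b : ℝ} {F F' : ℝ → ℝ}
    (hF : ∀ η ∈ Set.Ico a b, HasDerivWithinAt F (F' η) (Set.Ico a b) η)
    (h0 : F a < 0)
    (hkey : ∀ η ∈ Set.Ico a b, F η = 0 → F' η < 0) :
    ∀ η ∈ Set.Ico a b, F η < 0 := by
  by_contra h
  push_neg at h
  obtain ⟨η₁, hη₁, hFη₁⟩ := h
  set A : Set ℝ := {η | η ∈ Set.Ico a b ∧ 0 ≤ F η} with hAdef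
  have hAsub : A ⊆ Set.Ico a b := fun x hx => hx.1
  have hAne : A.Nonempty := ⟨η₁, hη₁, hFη₁⟩
  have hAbd : BddBelow A := ⟨a, fun x hx => hx.1.1⟩
  set t := sInf A with ht
  have hta : a ≤ t := le_csInf hAne fun x hx => hx.1.1
  have htb : t < b := lt_of_le_of_lt (csInf_le hAbd ⟨hη₁, hFη₁⟩) hη₁.2
  have htmem : t ∈ Set.Ico a b := ⟨hta, htb⟩
  have hcont : ContinuousOn F (Set.Ico a b) := fun x hx => (hF x hx).continuousWithinAt
  -- F < 0 strictly before t
  have hneg : ∀ x, a ≤ x → x < t → F x < 0 := by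
    intro x hax hxt
    by_contra hc
    push_neg at hc
    have hxA : x ∈ A := ⟨⟨hax, lt_trans hxt htb⟩, hc⟩
    exact absurd (csInf_le hAbd hxA) (not_le.mpr hxt)
  -- F t ≥ 0
  have htcl : t ∈ closure A := csInf_mem_closure hAne hAbd
  have hnbA : (𝓝[A] t).NeBot := mem_closure_iff_nhdsWithin_neBot.mp htcl
  have htendA : Filter.Tendsto F (𝓝[A] t) (𝓝 (F t)) :=
    ((hcont t htmem).mono hAsub).tendsto
  have hFt0 : 0 ≤ F t :=
    ge_of_tendsto htendA (eventually_of_mem self_mem_nhdsWithin fun x hx => hx.2)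
  -- so a < t
  have hat : a < t := by
    rcases eq_or_lt_of_le hta with h | h
    · exact absurd (h ▸ hFt0) (not_le.mpr h0)
    · exact h
  -- F t ≤ 0 by continuity from the left
  have hsub : Set.Ico a t ⊆ Set.Ico a b := Set.Ico_subset_Ico le_rfl htb.le
  have htcl' : t ∈ closure (Set.Ico a t) := by
    rw [closure_Ico hat.ne]; exact ⟨hat.le, le_rfl⟩
  have hnbL : (𝓝[Set.Ico a t] t).NeBot := mem_closure_iff_nhdsWithin_neBot.mp htcl'
  have htendL : Filter.Tendsto F (𝓝[Set.Ico a t] t) (𝓝 (F t)) :=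
    ((hcont t htmem).mono hsub).tendsto
  have hFt0' : F t ≤ 0 :=
    le_of_tendsto htendL
      (eventually_of_mem self_mem_nhdsWithin fun x hx => (hneg x hx.1 hx.2).le)
  have hFt : F t = 0 := le_antisymm hFt0' hFt0
  -- derivative at t from the left is nonnegative
  have hder : HasDerivWithinAt F (F' t) (Set.Ico a t) t := (hF t htmem).mono hsub
  have hslope : Filter.Tendsto (slope F t) (𝓝[Set.Ico a t \ {t}] t) (𝓝 (F' t)) :=
    hasDerivWithinAt_iff_tendsto_slope.mp hder
  have hset : Set.Ico a t \ {t} = Set.Ico a t := by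
    ext x; simp only [Set.mem_diff, Set.mem_singleton_iff, Set.mem_Ico, and_iff_left_iff_imp]
    rintro ⟨_, hx⟩; exact hx.ne
  rw [hset] at hslope
  have hF'nonneg : 0 ≤ F' t := by
    refine ge_of_tendsto hslope (eventually_of_mem self_mem_nhdsWithin fun x hx => ?_)
    have h1 : F x < 0 := hneg x hx.1 hx.2
    have h2 : x - t < 0 := sub_neg.mpr hx.2
    rw [slope_def_field, hFt, sub_zero]
    exact le_of_lt (div_pos_of_neg_of_neg h1 h2)
  exact absurd (hkey t htmem hFt) (not_lt.mpr hF'nonneg)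

/-- **Invariant region and monotonicity of `X` and `Z` along trajectories.**
For the autonomous system associated to the self-similar profile equation,
if a trajectory with `X > 0`, `Z > 0` starts in the region where
`(m-1)Y - 2X < 0` and `(p-1)Y + σX < 0`, it stays there, and consequently
`X` and `Z` are strictly decreasing along it. -/
theorem invariant_region_X_Z_decreasing
    (N : ℕ) (hN : 2 ≤ N) (m σ p α β : ℝ)
    (hm : 1 < m) (hσ1 : -2 < σ) (hσ2 : σ < 0)
    (hp1 : 1 < p) (hp2 : p < 1 - σ * (m - 1) / 2)
    (hα : α = -(σ + 2) / (σ * (m - 1) + 2 * (p - 1)))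
    (hβ : β = -(m - p) / (σ * (m - 1) + 2 * (p - 1)))
    (η₀ b : ℝ) (hηb : η₀ < b) (X Y Z : ℝ → ℝ)
    (hX : ∀ η ∈ Set.Ico η₀ b,
      HasDerivWithinAt X (X η * ((m - 1) * Y η - 2 * X η)) (Set.Ico η₀ b) η)
    (hY : ∀ η ∈ Set.Ico η₀ b,
      HasDerivWithinAt Y
        (-(Y η) ^ 2 - β / α * Y η + X η - (N : ℝ) * X η * Y η - X η * Z η)
        (Set.Ico η₀ b) η)
    (hZ : ∀ η ∈ Set.Ico η₀ b,
      HasDerivWithinAt Z (Z η * ((p - 1) * Y η + σ * X η)) (Set.Ico η₀ b) η)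
    (hXpos : ∀ η ∈ Set.Ico η₀ b, 0 < X η)
    (hZpos : ∀ η ∈ Set.Ico η₀ b, 0 < Z η)
    (hinit1 : (m - 1) * Y η₀ - 2 * X η₀ < 0)
    (hinit2 : (p - 1) * Y η₀ + σ * X η₀ < 0) :
    (∀ η ∈ Set.Ico η₀ b,
      (m - 1) * Y η - 2 * X η < 0 ∧ (p - 1) * Y η + σ * X η < 0) ∧
    StrictAntiOn X (Set.Ico η₀ b) ∧ StrictAntiOn Z (Set.Ico η₀ b) := by
  have hD : σ * (m - 1) + 2 * (p - 1) < 0 := by nlinarith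
  have hD0 : σ * (m - 1) + 2 * (p - 1) ≠ 0 := ne_of_lt hD
  have hσ2' : (0:ℝ) < σ + 2 := by linarith
  -- β/α = (m - p)/(σ + 2)
  have hq : β / α = (m - p) / (σ + 2) := by
    rw [hα, hβ]
    field_simp
  -- (m-1)/2 < β/α
  have hβα : (m - 1) / 2 < β / α := by
    rw [hq, div_lt_div_iff₀ (by norm_num) hσ2']
    nlinarith
  have hN2 : (2:ℝ) ≤ (N:ℝ) := by exact_mod_cast hN
  -- The invariance of F := (m-1)Y - 2X < 0 via the barrier lemma
  set F : ℝ → ℝ := fun η => (m - 1) * Y η - 2 * X η with hFdef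
  set F' : ℝ → ℝ := fun η =>
    (m - 1) * (-(Y η) ^ 2 - β / α * Y η + X η - (N : ℝ) * X η * Y η - X η * Z η)
      - 2 * (X η * ((m - 1) * Y η - 2 * X η)) with hF'def
  have hFder : ∀ η ∈ Set.Ico η₀ b, HasDerivWithinAt F (F' η) (Set.Ico η₀ b) η := by
    intro η hη
    exact ((hY η hη).const_mul (m - 1)).sub ((hX η hη).const_mul 2)
  have hkey : ∀ η ∈ Set.Ico η₀ b, F η = 0 → F' η < 0 := by
    intro η hη hF0
    have hXp := hXpos η hη
    have hZp := hZpos η hη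
    have hF0' : (m - 1) * Y η - 2 * X η = 0 := hF0
    have hYpos : 0 < Y η := by nlinarith
    have hY' : -(Y η) ^ 2 - β / α * Y η + X η - (N : ℝ) * X η * Y η - X η * Z η < 0 := by
      have h1 : 0 < Y η * (β / α - (m - 1) / 2) := mul_pos hYpos (by linarith)
      have h2 : 0 ≤ (N : ℝ) * X η * Y η := by positivity
      have h3 : 0 < X η * Z η := mul_pos hXp hZp
      have h4 : 0 ≤ (Y η) ^ 2 := sq_nonneg _
      nlinarith
    have : F' η = (m - 1) * (-(Y η) ^ 2 - β / α * Y η + X η - (N : ℝ) * X η * Y η - X η * Z η)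
        - 2 * (X η * ((m - 1) * Y η - 2 * X η)) := rfl
    rw [this, hF0', mul_zero, mul_zero, sub_zero]
    exact mul_neg_of_pos_of_neg (by linarith) hY'
  have hFneg : ∀ η ∈ Set.Ico η₀ b, F η < 0 := barrier_neg hFder hinit1 hkey
  -- G < 0 follows pointwise from F < 0
  have hGneg : ∀ η ∈ Set.Ico η₀ b, (p - 1) * Y η + σ * X η < 0 := by
    intro η hη
    have hXp := hXpos η hη
    have hFn : (m - 1) * Y η - 2 * X η < 0 := hFneg η hη
    nlinarith [mul_pos (sub_pos.mpr hp1) (show 0 < 2 * X η - (m - 1) * Y η by linarith),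
      mul_pos hXp (show 0 < -(σ * (m - 1) + 2 * (p - 1)) by linarith)]
  refine ⟨fun η hη => ⟨hFneg η hη, hGneg η hη⟩, ?_, ?_⟩
  · refine strictAntiOn_of_deriv_neg (convex_Ico η₀ b)
      (fun x hx => (hX x hx).continuousWithinAt) (fun x hx => ?_)
    rw [interior_Ico] at hx
    have hxm : x ∈ Set.Ico η₀ b := ⟨hx.1.le, hx.2⟩
    have := ((hX x hxm).hasDerivAt (Ico_mem_nhds hx.1 hx.2)).deriv
    rw [this]
    exact mul_neg_of_pos_of_neg (hXpos x hxm) (hFneg x hxm)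
  · refine strictAntiOn_of_deriv_neg (convex_Ico η₀ b)
      (fun x hx => (hZ x hx).continuousWithinAt) (fun x hx => ?_)
    rw [interior_Ico] at hx
    have hxm : x ∈ Set.Ico η₀ b := ⟨hx.1.le, hx.2⟩
    have := ((hZ x hxm).hasDerivAt (Ico_mem_nhds hx.1 hx.2)).deriv
    rw [this]
    exact mul_neg_of_pos_of_neg (hZpos x hxm) (hGneg x hxm)
end

section
/- Let N ≥ 2 be an integer, m > 1, σ ∈ (−2, 0) and 1 < p < p_c(σ) := 1 − σ(m−1)/2. There is no positive, twice continuously differentiable solution f of the profile ODE (f^m)'' + ((N−1)/ξ)(f^m)' − α f + β ξ f' + ξ^σ f^p = 0 on an interval (0, R), R > 0, satisfying simultaneously, as ξ → 0⁺: ξ^σ f(ξ)^{p−1} → ∞, ξ^{−(σ+2)} f(ξ)^{m−p} → 0, and ξ^{−(1+σ)} f(ξ)^{m−p−1} f'(ξ) → 0. -/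
open Real Filter Set Topology

set_option maxHeartbeats 1000000 in

/-- **No profiles connecting to `Q₄` as `ξ → 0⁺`.** There is no positive `C²`
solution of the profile ODE on an interval `(0, R)`, `R > 0`, such that, as
`ξ → 0⁺`, `ξ^σ f(ξ)^{p-1} → ∞`, `ξ^{-(σ+2)} f(ξ)^{m-p} → 0` and
`ξ^{-(1+σ)} f(ξ)^{m-p-1} f'(ξ) → 0`. -/
theorem no_profile_Q4_at_zero
    (N : ℕ) (hN : 2 ≤ N) (m σ p α β : ℝ)
    (hm : 1 < m) (hσ1 : -2 < σ) (hσ2 : σ < 0)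
    (hp1 : 1 < p) (hp2 : p < 1 - σ * (m - 1) / 2)
    (hα : α = -(σ + 2) / (σ * (m - 1) + 2 * (p - 1)))
    (hβ : β = -(m - p) / (σ * (m - 1) + 2 * (p - 1)))
    (R : ℝ) (hR : 0 < R) (f : ℝ → ℝ)
    (hf2 : ContDiffOn ℝ 2 f (Set.Ioo 0 R))
    (hfpos : ∀ ξ ∈ Set.Ioo 0 R, 0 < f ξ)
    (hODE : ∀ ξ ∈ Set.Ioo 0 R,
      deriv (deriv (fun x => f x ^ m)) ξ
        + ((N : ℝ) - 1) / ξ * deriv (fun x => f x ^ m) ξ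
        - α * f ξ + β * ξ * deriv f ξ + ξ ^ σ * f ξ ^ p = 0)
    (h1 : Tendsto (fun ξ => ξ ^ σ * f ξ ^ (p - 1)) (𝓝[>] 0) atTop)
    (h2 : Tendsto (fun ξ => ξ ^ (-(σ + 2)) * f ξ ^ (m - p)) (𝓝[>] 0) (𝓝 0))
    (h3 : Tendsto (fun ξ => ξ ^ (-(1 + σ)) * f ξ ^ (m - p - 1) * deriv f ξ)
      (𝓝[>] 0) (𝓝 0)) :
    False := by
  classical
  -- ### Elementary facts about the constants
  have hm1 : (0:ℝ) < m - 1 := by linarith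
  have hm0 : (0:ℝ) < m := by linarith
  have hσ2' : (0:ℝ) < σ + 2 := by linarith
  have hS : σ * (m - 1) + 2 * (p - 1) < 0 := by linarith
  have hpm : 0 < m - p := by nlinarith [mul_pos hσ2' hm1]
  have hβ0 : 0 < β := by rw [hβ]; exact div_pos_of_neg_of_neg (by linarith) hS
  have hα0 : 0 < α := by rw [hα]; exact div_pos_of_neg_of_neg (by linarith) hS
  have hN2 : (2:ℝ) ≤ (N:ℝ) := by exact_mod_cast hN
  -- ### Differentiability package
  have hIo : IsOpen (Set.Ioo (0:ℝ) R) := isOpen_Ioo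
  have hfd : ∀ x ∈ Set.Ioo (0:ℝ) R, HasDerivAt f (deriv f x) x := by
    intro x hx
    exact ((hf2.differentiableOn (by norm_num)).differentiableAt
      (hIo.mem_nhds hx)).hasDerivAt
  have hf2' : ContDiffOn ℝ 1 (deriv f) (Set.Ioo 0 R) :=
    hf2.deriv_of_isOpen hIo (by norm_num)
  have hf'd : ∀ x ∈ Set.Ioo (0:ℝ) R, HasDerivAt (deriv f) (deriv (deriv f) x) x := by
    intro x hx
    exact ((hf2'.differentiableOn (by norm_num)).differentiableAt
      (hIo.mem_nhds hx)).hasDerivAt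
  -- ### The ODE in fully explicit form
  have hode : ∀ x ∈ Set.Ioo (0:ℝ) R,
      deriv (deriv f) x * m * f x ^ (m - 1)
        + deriv f x * m * (deriv f x * (m - 1) * f x ^ (m - 1 - 1))
        + ((N : ℝ) - 1) / x * (deriv f x * m * f x ^ (m - 1))
        - α * f x + β * x * deriv f x + x ^ σ * f x ^ p = 0 := by
    intro x hx
    have hu' : ∀ y ∈ Set.Ioo (0:ℝ) R,
        HasDerivAt (fun z => f z ^ m) (deriv f y * m * f y ^ (m - 1)) y :=
      fun y hy => (hfd y hy).rpow_const (Or.inl (hfpos y hy).ne')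
    have hev : deriv (fun z => f z ^ m) =ᶠ[𝓝 x]
        fun y => deriv f y * m * f y ^ (m - 1) :=
      eventuallyEq_of_mem (hIo.mem_nhds hx) (fun y hy => (hu' y hy).deriv)
    have hg : HasDerivAt (fun y => deriv f y * m * f y ^ (m - 1))
        (deriv (deriv f) x * m * f x ^ (m - 1)
          + deriv f x * m * (deriv f x * (m - 1) * f x ^ (m - 1 - 1))) x :=
      ((hf'd x hx).mul_const m).mul ((hfd x hx).rpow_const (Or.inl (hfpos x hx).ne'))
    have e2 : deriv (deriv fun z => f z ^ m) x
        = deriv (deriv f) x * m * f x ^ (m - 1)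
          + deriv f x * m * (deriv f x * (m - 1) * f x ^ (m - 1 - 1)) := by
      rw [hev.deriv_eq]; exact hg.deriv
    have e1 : deriv (fun z => f z ^ m) x = deriv f x * m * f x ^ (m - 1) :=
      (hu' x hx).deriv
    have h0 := hODE x hx
    rw [e1, e2] at h0
    linarith only [h0]
  -- ### The functions `W`, `Af`, `Bf`
  set W : ℝ → ℝ := fun y => y * deriv f y / f y with hWdef
  set Af : ℝ → ℝ := fun y => y ^ σ * f y ^ (p - 1) with hAfdef
  set Bf : ℝ → ℝ := fun y => y ^ (-(σ + 2)) * f y ^ (m - p) with hBfdef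
  have hWd : ∀ x ∈ Set.Ioo (0:ℝ) R, HasDerivAt W
      (((1 * deriv f x + x * deriv (deriv f) x) * f x
        - x * deriv f x * deriv f x) / f x ^ 2) x := by
    intro x hx
    exact ((hasDerivAt_id x).mul (hf'd x hx)).div (hfd x hx) (hfpos x hx).ne'
  have hWD : ∀ x ∈ Set.Ioo (0:ℝ) R, HasDerivAt W (deriv W x) x := by
    intro x hx
    have h := hWd x hx
    rw [h.deriv]; exact h
  have hBD : ∀ x ∈ Set.Ioo (0:ℝ) R, HasDerivAt Bf
      ((-(σ + 2) * x ^ (-(σ + 2) - 1)) * f x ^ (m - p)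
        + x ^ (-(σ + 2)) * (deriv f x * (m - p) * f x ^ (m - p - 1))) x := by
    intro x hx
    exact (Real.hasDerivAt_rpow_const (Or.inl hx.1.ne')).mul
      ((hfd x hx).rpow_const (Or.inl (hfpos x hx).ne'))
  -- ### The key pointwise differential inequality
  have key : ∀ x ∈ Set.Ioo (0:ℝ) R, 2 * α ≤ Af x → Bf x ≤ 1 / (2 * m) → 0 ≤ W x →
      deriv W x ≤ -(m * W x ^ 2 + 1) / x := by
    intro x hx hA hB hW0
    obtain ⟨hx0, hxR⟩ := hx
    have hF : 0 < f x := hfpos x ⟨hx0, hxR⟩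
    have hdW : deriv W x = ((1 * deriv f x + x * deriv (deriv f) x) * f x
        - x * deriv f x * deriv f x) / f x ^ 2 := (hWd x ⟨hx0, hxR⟩).deriv
    have hodex := hode x ⟨hx0, hxR⟩
    set F := f x with hFdef
    set F1 := deriv f x with hF1def
    set F2 := deriv (deriv f) x with hF2def
    have hWx : W x = x * F1 / F := rfl
    have ha' : 2 * α ≤ x ^ σ * F ^ (p - 1) := hA
    have hb' : x ^ (-(σ + 2)) * F ^ (m - p) ≤ 1 / (2 * m) := hB
    set a := x ^ σ * F ^ (p - 1) with hadef
    set bb := x ^ (-(σ + 2)) * F ^ (m - p) with hbbdef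
    have ha0 : 0 < a := mul_pos (rpow_pos_of_pos hx0 _) (rpow_pos_of_pos hF _)
    have hbb0 : 0 < bb := mul_pos (rpow_pos_of_pos hx0 _) (rpow_pos_of_pos hF _)
    have hu0 : (0:ℝ) < F ^ m := rpow_pos_of_pos hF _
    -- rpow bookkeeping
    have e1 : F ^ (m - 1) = F ^ m / F := by
      rw [rpow_sub hF, rpow_one]
    have e2 : F ^ (m - 1 - 1) = F ^ m / F / F := by
      rw [rpow_sub hF (m - 1) 1, rpow_sub hF m 1, rpow_one]
    have e3 : x ^ σ * F ^ p = a * F := by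
      rw [hadef, mul_assoc]
      congr 1
      rw [← Real.rpow_add_one hF.ne' (p - 1)]
      norm_num
    have h4 : a * bb * (x * x) * F = F ^ m := by
      have hx2 : x ^ σ * x ^ (-(σ + 2)) * (x * x) = 1 := by
        rw [← Real.rpow_add hx0, show x * x = x ^ (2:ℕ) by ring,
          ← Real.rpow_natCast x 2, ← Real.rpow_add hx0]
        norm_num
      have hf4 : F ^ (p - 1) * F ^ (m - p) * F = F ^ m := by
        rw [← Real.rpow_add hF, ← Real.rpow_add_one hF.ne']
        norm_num
      calc a * bb * (x * x) * F
          = (x ^ σ * x ^ (-(σ + 2)) * (x * x)) * (F ^ (p - 1) * F ^ (m - p) * F) := by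
            rw [hadef, hbbdef]; ring
        _ = F ^ m := by rw [hx2, hf4, one_mul]
    -- clear denominators in the ODE
    rw [e1, e2, e3] at hodex
    have hodexP : m * (m - 1) * F ^ m * F1 ^ 2 * x * F ^ 2 + m * F ^ m * F ^ 3 * x * F2
        + ((N:ℝ) - 1) * m * F ^ m * F ^ 3 * F1 - α * x * F ^ 5
        + β * x ^ 2 * F ^ 4 * F1 + a * x * F ^ 5 = 0 := by
      have h := hodex
      field_simp at h
      linear_combination F ^ 2 * h
    have hF2eq : F2 = (α * x * F ^ 5 - β * x ^ 2 * F ^ 4 * F1 - a * x * F ^ 5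
        - ((N:ℝ) - 1) * m * F ^ m * F ^ 3 * F1 - m * (m - 1) * F ^ m * F1 ^ 2 * x * F ^ 2)
        / (m * F ^ m * F ^ 3 * x) := by
      rw [eq_div_iff (by positivity)]
      linear_combination hodexP
    -- the central identity
    have hident : deriv W x = ((2 - (N:ℝ)) * (x * F1 / F) - m * (x * F1 / F) ^ 2
        + (x * x) * (F / F ^ m) * (α - β * (x * F1 / F) - a) / m) / x := by
      rw [hdW, hF2eq]
      field_simp
      ring
    have h5 : (x * x) * (F / F ^ m) = 1 / (a * bb) := by
      rw [eq_div_iff (by positivity)]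
      field_simp
      linear_combination h4
    have hWx0 : 0 ≤ x * F1 / F := by rw [← hWx]; exact hW0
    -- bound the reaction term
    have h6 : α - β * (x * F1 / F) - a ≤ -(a / 2) := by
      have hh := mul_nonneg hβ0.le hWx0
      linarith only [ha', hh]
    have h7 : (1 / (a * bb)) * (α - β * (x * F1 / F) - a) / m
        ≤ (1 / (a * bb)) * (-(a / 2)) / m := by
      gcongr
    have h8 : (1 / (a * bb)) * (-(a / 2)) / m = -(1 / (2 * bb * m)) := by
      field_simp
    have h2m : (0:ℝ) < 2 * m := by linarith
    have hBle : bb * (2 * m) ≤ 1 := by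
      calc bb * (2 * m) ≤ (1 / (2 * m)) * (2 * m) :=
            mul_le_mul_of_nonneg_right hb' h2m.le
        _ = 1 := by field_simp
    have h9 : 1 ≤ 1 / (2 * bb * m) := by
      rw [le_div_iff₀ (by positivity)]
      linarith only [hBle]
    have hterm : (x * x) * (F / F ^ m) * (α - β * (x * F1 / F) - a) / m ≤ -1 := by
      rw [h5]
      calc (1 / (a * bb)) * (α - β * (x * F1 / F) - a) / m
          ≤ (1 / (a * bb)) * (-(a / 2)) / m := h7
        _ = -(1 / (2 * bb * m)) := h8
        _ ≤ -1 := by linarith only [h9]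
    have hNW : (2 - (N:ℝ)) * (x * F1 / F) ≤ 0 :=
      mul_nonpos_of_nonpos_of_nonneg (by linarith) hWx0
    rw [hident, hWx]
    exact (div_le_div_iff_of_pos_right hx0).2 (by linarith only [hterm, hNW])
  -- ### Choice of a good radius `δ₀`
  have hev1 : ∀ᶠ x in 𝓝[>] (0:ℝ), 2 * α ≤ Af x := h1.eventually_ge_atTop (2 * α)
  have hev2 : ∀ᶠ x in 𝓝[>] (0:ℝ), Bf x < 1 / (2 * m) :=
    h2.eventually (eventually_lt_nhds (by positivity))
  have hev3 : ∀ᶠ x in 𝓝[>] (0:ℝ), x ∈ Set.Ioo (0:ℝ) R :=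
    eventually_of_mem (Ioo_mem_nhdsGT_of_mem ⟨le_refl 0, hR⟩) (fun x hx => hx)
  obtain ⟨δ₀, hδ₀pos, hδsub⟩ :=
    mem_nhdsGT_iff_exists_Ioo_subset.1 (hev1.and (hev2.and hev3))
  have hδ0 : (0:ℝ) < δ₀ := hδ₀pos
  have hgood : ∀ x ∈ Set.Ioo (0:ℝ) δ₀,
      2 * α ≤ Af x ∧ Bf x < 1 / (2 * m) ∧ x ∈ Set.Ioo (0:ℝ) R :=
    fun x hx => hδsub hx
  by_cases hcase : ∃ ξ₁ ∈ Set.Ioo (0:ℝ) δ₀, 0 ≤ W ξ₁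
  · -- ### Case 2 : `W` is nonnegative somewhere near `0`; blow-up of `W`.
    obtain ⟨ξ₁, hξ₁, hWξ₁⟩ := hcase
    have hξ₁0 : 0 < ξ₁ := hξ₁.1
    have hmemδ : ∀ x ∈ Set.Ioc (0:ℝ) ξ₁, x ∈ Set.Ioo (0:ℝ) δ₀ :=
      fun x hx => ⟨hx.1, lt_of_le_of_lt hx.2 hξ₁.2⟩
    have hmemR : ∀ x ∈ Set.Ioc (0:ℝ) ξ₁, x ∈ Set.Ioo (0:ℝ) R :=
      fun x hx => (hgood x (hmemδ x hx)).2.2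
    have key' : ∀ x ∈ Set.Ioc (0:ℝ) ξ₁, 0 ≤ W x →
        deriv W x ≤ -(m * W x ^ 2 + 1) / x :=
      fun x hx h0 => key x (hmemR x hx) (hgood x (hmemδ x hx)).1
        (hgood x (hmemδ x hx)).2.1.le h0
    -- `W ≥ 0` on all of `(0, ξ₁]`
    have hInv : ∀ x ∈ Set.Ioc (0:ℝ) ξ₁, 0 ≤ W x := by
      by_contra hcon
      push_neg at hcon
      obtain ⟨ξs, hξs, hWs⟩ := hcon
      set T := {y ∈ Set.Icc ξs ξ₁ | W y < 0} with hTdef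
      have hξsT : ξs ∈ T := ⟨⟨le_refl _, hξs.2⟩, hWs⟩
      have hTne : T.Nonempty := ⟨ξs, hξsT⟩
      have hTbdd : BddAbove T := ⟨ξ₁, fun y hy => hy.1.2⟩
      set b := sSup T with hbdef
      have hξsb : ξs ≤ b := le_csSup hTbdd hξsT
      have hble : b ≤ ξ₁ := csSup_le hTne (fun y hy => hy.1.2)
      have hbIoc : b ∈ Set.Ioc (0:ℝ) ξ₁ := ⟨lt_of_lt_of_le hξs.1 hξsb, hble⟩
      have hbR : b ∈ Set.Ioo (0:ℝ) R := hmemR b hbIoc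
      have hbc : b ∈ closure T := csSup_mem_closure hTne hTbdd
      haveI hnb : (𝓝[T] b).NeBot := mem_closure_iff_nhdsWithin_neBot.1 hbc
      have hWble : W b ≤ 0 :=
        le_of_tendsto ((hWD b hbR).continuousAt.continuousWithinAt)
          ((eventually_mem_nhdsWithin : ∀ᶠ y in 𝓝[T] b, y ∈ T).mono fun y (hy : y ∈ T) => hy.2.le)
      have hWbge : 0 ≤ W b := by
        by_contra hneg
        push_neg at hneg
        have hblt : b < ξ₁ :=
          lt_of_le_of_ne hble (fun h => by rw [h] at hneg; linarith)
        have hsl : ∀ᶠ y in 𝓝 b, W y < 0 :=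
          ((hWD b hbR).continuousAt).eventually (eventually_lt_nhds hneg)
        obtain ⟨y, hyI, hyW⟩ :=
          ((eventually_of_mem (Ioo_mem_nhdsGT hblt) (fun y hy => hy)).and
            (hsl.filter_mono nhdsWithin_le_nhds)).exists
        have hyT : y ∈ T := ⟨⟨le_trans hξsb hyI.1.le, hyI.2.le⟩, hyW⟩
        exact absurd (le_csSup hTbdd hyT) (not_le.2 hyI.1)
      have hWb : W b = 0 := le_antisymm hWble hWbge
      have hkb : deriv W b < 0 := by
        have h := key' b hbIoc hWbge
        have h' : -(m * W b ^ 2 + 1) / b < 0 := by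
          apply div_neg_of_neg_of_pos _ hbIoc.1
          have := mul_nonneg hm0.le (sq_nonneg (W b))
          linarith only [this]
        linarith only [h, h']
      have hslope : ∀ᶠ y in 𝓝[≠] b, slope W b y < 0 :=
        (hasDerivAt_iff_tendsto_slope.1 (hWD b hbR)).eventually (eventually_lt_nhds hkb)
      rcases eq_or_lt_of_le hble with heq | hlt
      · -- `b = ξ₁` : points of `T` accumulate from the left, slope there is positive
        have hTnb : T ⊆ {b}ᶜ := by
          intro y hy hyb
          rw [Set.mem_singleton_iff] at hyb
          rw [hyb] at hy
          have := hy.2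
          rw [hWb] at this
          exact lt_irrefl 0 this
        obtain ⟨y, hyT, hysl⟩ :=
          (eventually_mem_nhdsWithin.and
            (hslope.filter_mono (nhdsWithin_mono b hTnb))).exists
        have hyne : y ≠ b := fun h => (hTnb hyT) (by rw [h]; exact rfl)
        have hylt : y < b := lt_of_le_of_ne (heq ▸ hyT.1.2) hyne
        have hpos : 0 < slope W b y := by
          rw [slope_def_field, hWb]
          apply div_pos_of_neg_of_neg
          · simpa using hyT.2
          · linarith
        linarith
      · -- `b < ξ₁` : just to the right of `b` the slope forces `W < 0`, contradiction
        obtain ⟨y, hyI, hysl⟩ :=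
          ((eventually_of_mem (Ioo_mem_nhdsGT hlt) (fun y hy => hy)).and
            (hslope.filter_mono (nhdsWithin_mono b (fun y hy => ne_of_gt hy)))).exists
        have hyT : y ∉ T := fun hy => absurd (le_csSup hTbdd hy) (not_le.2 hyI.1)
        have hWy : 0 ≤ W y :=
          le_of_not_gt (fun h => hyT ⟨⟨le_trans hξsb hyI.1.le, hyI.2.le⟩, h⟩)
        have hpos : 0 ≤ slope W b y := by
          rw [slope_def_field, hWb]
          exact div_nonneg (by linarith) (by linarith [hyI.1])
        linarith
    -- ### Step A : `W x ≥ log ξ₁ - log x` on `(0, ξ₁]`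
    have hφd : ∀ y ∈ Set.Ioc (0:ℝ) ξ₁,
        HasDerivAt (fun z => W z + Real.log z) (deriv W y + y⁻¹) y :=
      fun y hy => (hWD y (hmemR y hy)).add (Real.hasDerivAt_log hy.1.ne')
    have hφanti : AntitoneOn (fun z => W z + Real.log z) (Set.Ioc (0:ℝ) ξ₁) := by
      apply antitoneOn_of_deriv_nonpos (convex_Ioc _ _)
      · exact fun y hy => (hφd y hy).continuousAt.continuousWithinAt
      · intro y hy
        rw [interior_Ioc] at hy
        exact (hφd y (Set.Ioo_subset_Ioc_self hy)).differentiableAt.differentiableWithinAt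
      · intro y hy
        rw [interior_Ioc] at hy
        have hyIoc : y ∈ Set.Ioc (0:ℝ) ξ₁ := Set.Ioo_subset_Ioc_self hy
        rw [(hφd y hyIoc).deriv]
        have hk := key' y hyIoc (hInv y hyIoc)
        have hy0 : (0:ℝ) < y := hy.1
        have h0 : -(m * W y ^ 2 + 1) / y + y⁻¹ = -(m * W y ^ 2) / y := by
          field_simp
          ring
        have h1' : -(m * W y ^ 2) / y ≤ 0 := by
          apply div_nonpos_of_nonpos_of_nonneg _ hy0.le
          have := mul_nonneg hm0.le (sq_nonneg (W y))
          linarith only [this]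
        linarith only [hk, h0, h1']
    set ξ₂ := ξ₁ * Real.exp (-1) with hξ₂def
    have hξ₂0 : 0 < ξ₂ := mul_pos hξ₁0 (Real.exp_pos _)
    have hξ₂lt : ξ₂ < ξ₁ :=
      mul_lt_of_lt_one_right hξ₁0 (Real.exp_lt_one_iff.2 (by norm_num))
    have hlogξ₂ : Real.log ξ₂ = Real.log ξ₁ - 1 := by
      rw [hξ₂def, Real.log_mul hξ₁0.ne' (Real.exp_pos _).ne', Real.log_exp]
      ring
    have hW1 : ∀ y ∈ Set.Ioc (0:ℝ) ξ₂, 1 ≤ W y := by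
      intro y hy
      have hyIoc : y ∈ Set.Ioc (0:ℝ) ξ₁ := ⟨hy.1, le_trans hy.2 hξ₂lt.le⟩
      have h : W ξ₁ + Real.log ξ₁ ≤ W y + Real.log y :=
        hφanti hyIoc ⟨hξ₁0, le_refl _⟩ hyIoc.2
      have hlog : Real.log y ≤ Real.log ξ₂ := by
        rw [Real.log_le_log_iff hy.1 hξ₂0]
        exact hy.2
      linarith only [h, hlog, hlogξ₂, hWξ₁]
    -- ### Step B : `1/W` grows at least like `m log`, contradiction
    have hψd : ∀ y ∈ Set.Ioc (0:ℝ) ξ₂,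
        HasDerivAt (fun z => (W z)⁻¹ - m * Real.log z)
          (-(deriv W y) / W y ^ 2 - m * y⁻¹) y := by
      intro y hy
      have hyIoc : y ∈ Set.Ioc (0:ℝ) ξ₁ := ⟨hy.1, le_trans hy.2 hξ₂lt.le⟩
      have hW1y : 1 ≤ W y := hW1 y hy
      exact ((hWD y (hmemR y hyIoc)).inv (by linarith)).sub
        ((Real.hasDerivAt_log hy.1.ne').const_mul m)
    have hψmono : MonotoneOn (fun z => (W z)⁻¹ - m * Real.log z) (Set.Ioc (0:ℝ) ξ₂) := by
      apply monotoneOn_of_deriv_nonneg (convex_Ioc _ _)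
      · exact fun y hy => (hψd y hy).continuousAt.continuousWithinAt
      · intro y hy
        rw [interior_Ioc] at hy
        exact (hψd y (Set.Ioo_subset_Ioc_self hy)).differentiableAt.differentiableWithinAt
      · intro y hy
        rw [interior_Ioc] at hy
        have hyIoc₂ : y ∈ Set.Ioc (0:ℝ) ξ₂ := Set.Ioo_subset_Ioc_self hy
        have hyIoc : y ∈ Set.Ioc (0:ℝ) ξ₁ := ⟨hy.1, le_trans hyIoc₂.2 hξ₂lt.le⟩
        rw [(hψd y hyIoc₂).deriv]
        have hk := key' y hyIoc (hInv y hyIoc)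
        have hW1y : 1 ≤ W y := hW1 y hyIoc₂
        have hy0 : (0:ℝ) < y := hy.1
        have hW20 : 0 < W y ^ 2 := pow_pos (by linarith) 2
        have hk' : (m * W y ^ 2 + 1) / y ≤ -(deriv W y) := by
          rw [neg_div] at hk
          linarith only [hk]
        have h2' : (m * W y ^ 2 + 1) / y / W y ^ 2 ≤ -(deriv W y) / W y ^ 2 :=
          (div_le_div_iff_of_pos_right hW20).2 hk'
        have h3' : (m * W y ^ 2 + 1) / y / W y ^ 2 - m * y⁻¹ = 1 / (y * W y ^ 2) := by
          field_simp
          ring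
        have h4' : 0 < 1 / (y * W y ^ 2) := one_div_pos.2 (mul_pos hy0 hW20)
        linarith only [h2', h3', h4']
    set x₃ := ξ₂ * Real.exp (-(2 / m)) with hx₃def
    have hx₃0 : 0 < x₃ := mul_pos hξ₂0 (Real.exp_pos _)
    have hx₃le : x₃ ≤ ξ₂ := by
      have h2m : (0:ℝ) < 2 / m := by positivity
      exact (mul_le_of_le_one_right hξ₂0.le
        (Real.exp_lt_one_iff.2 (by linarith)).le)
    have hx₃mem : x₃ ∈ Set.Ioc (0:ℝ) ξ₂ := ⟨hx₃0, hx₃le⟩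
    have hξ₂mem : ξ₂ ∈ Set.Ioc (0:ℝ) ξ₂ := ⟨hξ₂0, le_refl _⟩
    have hmon : (W x₃)⁻¹ - m * Real.log x₃ ≤ (W ξ₂)⁻¹ - m * Real.log ξ₂ :=
      hψmono hx₃mem hξ₂mem hx₃le
    have hlogx₃ : Real.log x₃ = Real.log ξ₂ - 2 / m := by
      rw [hx₃def, Real.log_mul hξ₂0.ne' (Real.exp_pos _).ne', Real.log_exp]
      ring
    have hWx₃ : 1 ≤ W x₃ := hW1 x₃ hx₃mem
    have hWξ₂1 : 1 ≤ W ξ₂ := hW1 ξ₂ hξ₂mem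
    have hinv1 : (W ξ₂)⁻¹ ≤ 1 := inv_le_one_of_one_le₀ hWξ₂1
    have hinv2 : 0 < (W x₃)⁻¹ := by
      have h : (0:ℝ) < W x₃ := by linarith
      exact inv_pos.2 h
    have hm2 : m * (2 / m) = 2 := by field_simp
    rw [hlogx₃, mul_sub, hm2] at hmon
    linarith only [hmon, hinv1, hinv2]
  · -- ### Case 1 : `W < 0` near `0`, so `Bf` is strictly decreasing, contradicting `Bf → 0`.
    push_neg at hcase
    have hneg : ∀ x ∈ Set.Ioo (0:ℝ) δ₀, W x < 0 := fun x hx => hcase x hx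
    have hBneg : ∀ x ∈ Set.Ioo (0:ℝ) δ₀, deriv Bf x < 0 := by
      intro x hx
      have hxR : x ∈ Set.Ioo (0:ℝ) R := (hgood x hx).2.2
      have hF := hfpos x hxR
      have hx0 := hx.1
      have hF1 : deriv f x < 0 := by
        have hW' : x * deriv f x / f x < 0 := hneg x hx
        by_contra hge
        push_neg at hge
        have : 0 ≤ x * deriv f x / f x :=
          div_nonneg (mul_nonneg hx0.le hge) hF.le
        linarith only [this, hW']
      rw [(hBD x hxR).deriv]
      have h1' : -(σ + 2) * x ^ (-(σ + 2) - 1) * f x ^ (m - p) < 0 :=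
        mul_neg_of_neg_of_pos
          (mul_neg_of_neg_of_pos (by linarith) (rpow_pos_of_pos hx0 _))
          (rpow_pos_of_pos hF _)
      have h2' : x ^ (-(σ + 2)) * (deriv f x * (m - p) * f x ^ (m - p - 1)) < 0 :=
        mul_neg_of_pos_of_neg (rpow_pos_of_pos hx0 _)
          (mul_neg_of_neg_of_pos (mul_neg_of_neg_of_pos hF1 hpm)
            (rpow_pos_of_pos hF _))
      linarith only [h1', h2']
    have hBcont : ContinuousOn Bf (Set.Ioo (0:ℝ) δ₀) := fun x hx =>
      (hBD x (hgood x hx).2.2).continuousAt.continuousWithinAt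
    have hanti : StrictAntiOn Bf (Set.Ioo (0:ℝ) δ₀) := by
      apply strictAntiOn_of_deriv_neg (convex_Ioo _ _) hBcont
      intro x hx
      rw [interior_Ioo] at hx
      exact hBneg x hx
    set ξ' := δ₀ / 2 with hξ'def
    have hξ'0 : 0 < ξ' := half_pos hδ0
    have hξ'mem : ξ' ∈ Set.Ioo (0:ℝ) δ₀ := ⟨hξ'0, by
      rw [hξ'def]; linarith⟩
    have hBpos : 0 < Bf ξ' :=
      mul_pos (rpow_pos_of_pos hξ'0 _)
        (rpow_pos_of_pos (hfpos ξ' (hgood ξ' hξ'mem).2.2) _)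
    have hevge : ∀ᶠ x in 𝓝[>] (0:ℝ), Bf ξ' ≤ Bf x := by
      filter_upwards [Ioo_mem_nhdsGT_of_mem (⟨le_refl (0:ℝ), hξ'0⟩ : (0:ℝ) ∈ Set.Ico 0 ξ')] with x hx
      exact (hanti ⟨hx.1, lt_trans hx.2 hξ'mem.2⟩ hξ'mem hx.2).le
    have hle : Bf ξ' ≤ 0 := ge_of_tendsto h2 hevge
    linarith only [hle, hBpos]
end

section
/- Let N ≥ 2 be an integer, m > 1, σ ∈ (−2, 0) and 1 < p < p_c(σ) := 1 − σ(m−1)/2, and consider the planar system ẏ = −(N−2)y + w − m y² − (β/α) y w, ẇ = w(2 − (m−1)y). Define the region R := {(y, w) : 0 < y < α/β, w > (m y² + (N−2)y)/(1 − (β/α)y)}. Then: (i) α/β < 2/(m−1); (ii) at every point of R one has ẏ > 0 and ẇ > 0; (iii) R is positively invariant: any solution (y, w) of the system with (y(t₀), w(t₀)) ∈ R satisfies (y(t), w(t)) ∈ R for all later times t in its maximal interval of existence; in particular y(t) < α/β for all such t; (iv) along such a solution, w(t) → +∞ as t approaches the right endpoint of the maximal interval of existence. -/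
open Real Filter Set Topology

/-- The interval `[t₀, b)` with `b` an extended real. -/
def solDom (t₀ : ℝ) (b : EReal) : Set ℝ := {t : ℝ | t₀ ≤ t ∧ (t : EReal) < b}

/-- A solution of the planar system `ẏ = -(N-2)y + w - m y² - (β/α) y w`,
`ẇ = w(2 - (m-1)y)` on the set `s`. -/
def IsSolYW (N : ℕ) (m α β : ℝ) (s : Set ℝ) (y w : ℝ → ℝ) : Prop :=
  ∀ t ∈ s,
    HasDerivWithinAt y
      (-(((N : ℝ)) - 2) * y t + w t - m * y t ^ 2 - β / α * y t * w t) s t ∧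
    HasDerivWithinAt w (w t * (2 - (m - 1) * y t)) s t

/-- The region `R = {(y, w) : 0 < y < α/β, w > (m y² + (N-2)y)/(1 - (β/α)y)}`. -/
def regionR (N : ℕ) (m α β : ℝ) : Set (ℝ × ℝ) :=
  {q : ℝ × ℝ | 0 < q.1 ∧ q.1 < α / β ∧
    (m * q.1 ^ 2 + ((N : ℝ) - 2) * q.1) / (1 - β / α * q.1) < q.2}

lemma aux_no_touch {f : ℝ → ℝ} {s : Set ℝ} {t₀ t₁ d : ℝ} (h01 : t₀ < t₁)
    (hsub : Ioo t₀ t₁ ⊆ s) (hf : HasDerivWithinAt f d s t₁)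
    (hpos : ∀ t ∈ Ioo t₀ t₁, 0 < f t) (h0 : f t₁ = 0) (hd : 0 < d) : False := by
  have h := (hf.mono hsub)
  rw [hasDerivWithinAt_iff_tendsto_slope] at h
  have hne : t₁ ∉ Ioo t₀ t₁ := by simp
  rw [diff_singleton_eq_self hne] at h
  haveI : (𝓝[Ioo t₀ t₁] t₁).NeBot := right_nhdsWithin_Ioo_neBot h01
  have hle : d ≤ 0 := by
    refine le_of_tendsto h ?_
    filter_upwards [self_mem_nhdsWithin] with t ht
    have hslope : slope f t₁ t = (f t - f t₁) / (t - t₁) := by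
      rw [slope_def_field]
    rw [hslope, h0, sub_zero]
    exact div_nonpos_of_nonneg_of_nonpos (hpos t ht).le (by linarith [ht.2])
  linarith

lemma aux_mono_limit {f : ℝ → ℝ} {t₀ br : ℝ} (h : t₀ < br)
    (hmono : MonotoneOn f (Ico t₀ br)) (hb : BddAbove (f '' Ico t₀ br)) :
    ∃ L, Tendsto f (𝓝[<] br) (𝓝 L) ∧ ∀ t ∈ Ico t₀ br, f t ≤ L := by
  set g : ℝ → ℝ := fun t => f (max t t₀) with hg
  have hmem : ∀ t ∈ Iio br, max t t₀ ∈ Ico t₀ br := fun t ht => ⟨le_max_right _ _, max_lt ht h⟩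
  have hgmono : MonotoneOn g (Iio br) := fun x hx z hz hxz =>
    hmono (hmem x hx) (hmem z hz) (max_le_max hxz le_rfl)
  have hgb : BddAbove (g '' Iio br) := by
    obtain ⟨M, hM⟩ := hb
    exact ⟨M, by rintro _ ⟨t, ht, rfl⟩; exact hM (mem_image_of_mem f (hmem t ht))⟩
  refine ⟨sSup (g '' Iio br), ?_, ?_⟩
  · refine (hgmono.tendsto_nhdsLT hgb).congr' ?_
    filter_upwards [Ioo_mem_nhdsLT h] with t ht
    simp [hg, max_eq_left ht.1.le]
  · intro t ht
    have hfg : f t = g t := by simp [hg, max_eq_left ht.1]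
    rw [hfg]
    exact le_csSup hgb (mem_image_of_mem g ht.2)

lemma aux_glue {t₀ br ε : ℝ} (h0 : t₀ < br) (hε : 0 < ε) {U d : ℝ → ℝ}
    (hu : ∀ t ∈ Ico t₀ br, HasDerivWithinAt U (d t) (Ico t₀ br) t)
    (hulim : Tendsto U (𝓝[<] br) (𝓝 (U br)))
    (hdlim : Tendsto d (𝓝[<] br) (𝓝 (d br)))
    (hg : ∀ t ∈ Icc br (br + ε), HasDerivWithinAt U (d t) (Icc br (br + ε)) t) :
    ∀ t ∈ Ico t₀ (br + ε), HasDerivWithinAt U (d t) (Ico t₀ (br + ε)) t := by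
  have hIoo : Ioo t₀ br ∈ 𝓝[<] br := Ioo_mem_nhdsLT h0
  have hDA : ∀ τ ∈ Ioo t₀ br, HasDerivAt U (d τ) τ := fun τ hτ =>
    (hu τ (Ioo_subset_Ico_self hτ)).hasDerivAt
      (mem_of_superset (isOpen_Ioo.mem_nhds hτ) Ioo_subset_Ico_self)
  have hleft : HasDerivWithinAt U (d br) (Iic br) br := by
    apply hasDerivWithinAt_Iic_of_tendsto_deriv (s := Ioo t₀ br)
    · intro τ hτ
      exact (hDA τ hτ).differentiableAt.differentiableWithinAt
    · exact hulim.mono_left (nhdsWithin_mono _ Ioo_subset_Iio_self)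
    · exact hIoo
    · refine hdlim.congr' ?_
      filter_upwards [hIoo] with τ hτ
      exact ((hDA τ hτ).deriv).symm
  intro t ht
  rcases lt_trichotomy t br with hlt | heq | hgt
  · have hmem : Ico t₀ br ∈ 𝓝[Ico t₀ (br + ε)] t := by
      have hss : Ico t₀ (br + ε) ∩ Iio br ⊆ Ico t₀ br := fun x hx => ⟨hx.1.1, hx.2⟩
      exact mem_of_superset (inter_mem self_mem_nhdsWithin
        (mem_nhdsWithin_of_mem_nhds (Iio_mem_nhds hlt))) hss
    exact (hu t ⟨ht.1, hlt⟩).mono_of_mem_nhdsWithin hmem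
  · subst heq
    have hunion := hleft.union (hg t ⟨le_refl t, by linarith⟩)
    refine hunion.mono fun x hx => ?_
    rcases le_or_gt x t with h | h
    · exact Or.inl h
    · exact Or.inr ⟨h.le, hx.2.le⟩
  · have hmem : Icc br (br + ε) ∈ 𝓝[Ico t₀ (br + ε)] t := by
      have hss : Ico t₀ (br + ε) ∩ Ioi br ⊆ Icc br (br + ε) := fun x hx => ⟨hx.2.le, hx.1.2.le⟩
      exact mem_of_superset (inter_mem self_mem_nhdsWithin
        (mem_nhdsWithin_of_mem_nhds (Ioi_mem_nhds hgt))) hss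
    exact (hg t ⟨hgt.le, ht.2.le⟩).mono_of_mem_nhdsWithin hmem

section

variable {N : ℕ} {m α β : ℝ}

lemma aux_regionR_iff (hα0 : 0 < α) (hβ0 : 0 < β) (q : ℝ × ℝ) :
    q ∈ regionR N m α β ↔ (0 < q.1 ∧ q.1 < α / β ∧
      m * q.1 ^ 2 + ((N : ℝ) - 2) * q.1 < (1 - β / α * q.1) * q.2) := by
  have hβα1 : β / α * (α / β) = 1 := by field_simp
  constructor
  · rintro ⟨h1, h2, h3⟩
    have hky : β / α * q.1 < 1 := by
      have := mul_lt_mul_of_pos_left h2 (div_pos hβ0 hα0)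
      rwa [hβα1] at this
    have hden : 0 < 1 - β / α * q.1 := by linarith
    refine ⟨h1, h2, ?_⟩
    have := (div_lt_iff₀ hden).1 h3
    nlinarith [this]
  · rintro ⟨h1, h2, h3⟩
    have hky : β / α * q.1 < 1 := by
      have := mul_lt_mul_of_pos_left h2 (div_pos hβ0 hα0)
      rwa [hβα1] at this
    have hden : 0 < 1 - β / α * q.1 := by linarith
    refine ⟨h1, h2, ?_⟩
    rw [div_lt_iff₀ hden]
    nlinarith [h3]

lemma aux_regionR_open :
    IsOpen {q : ℝ × ℝ | 0 < q.1 ∧ q.1 < α / β ∧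
      m * q.1 ^ 2 + ((N : ℝ) - 2) * q.1 < (1 - β / α * q.1) * q.2} := by
  have h1 : IsOpen {q : ℝ × ℝ | 0 < q.1} := isOpen_lt continuous_const continuous_fst
  have h2 : IsOpen {q : ℝ × ℝ | q.1 < α / β} := isOpen_lt continuous_fst continuous_const
  have h3 : IsOpen {q : ℝ × ℝ | m * q.1 ^ 2 + ((N : ℝ) - 2) * q.1 < (1 - β / α * q.1) * q.2} := by
    apply isOpen_lt
    · fun_prop
    · fun_prop
  have heq : {q : ℝ × ℝ | 0 < q.1 ∧ q.1 < α / β ∧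
      m * q.1 ^ 2 + ((N : ℝ) - 2) * q.1 < (1 - β / α * q.1) * q.2}
      = {q : ℝ × ℝ | 0 < q.1} ∩ ({q : ℝ × ℝ | q.1 < α / β} ∩
        {q : ℝ × ℝ | m * q.1 ^ 2 + ((N : ℝ) - 2) * q.1 < (1 - β / α * q.1) * q.2}) := rfl
  rw [heq]
  exact h1.inter (h2.inter h3)

set_option maxHeartbeats 1000000 in
lemma aux_invariance (hN : 2 ≤ N) (hm : 1 < m) (hα0 : 0 < α) (hβ0 : 0 < β)
    (hi : α / β < 2 / (m - 1))
    (hVF : ∀ q ∈ regionR N m α β,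
      0 < -(((N : ℝ)) - 2) * q.1 + q.2 - m * q.1 ^ 2 - β / α * q.1 * q.2 ∧
      0 < q.2 * (2 - (m - 1) * q.1))
    (t₀ : ℝ) (b : EReal) (hb : (t₀ : EReal) < b) (y w : ℝ → ℝ)
    (hsol : IsSolYW N m α β (solDom t₀ b) y w)
    (hmem : (y t₀, w t₀) ∈ regionR N m α β) :
    ∀ t ∈ solDom t₀ b, (y t, w t) ∈ regionR N m α β := by
  have hN2 : (2 : ℝ) ≤ (N : ℝ) := by exact_mod_cast hN
  have hm1 : (0 : ℝ) < m - 1 := by linarith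
  have hβα1 : β / α * (α / β) = 1 := by field_simp
  have hβαpos : 0 < β / α := div_pos hβ0 hα0
  have hr0 : 0 < α / β := div_pos hα0 hβ0
  set s := solDom t₀ b with hs
  have hts : t₀ ∈ s := ⟨le_rfl, hb⟩
  have hseg : ∀ t ∈ s, ∀ t', t₀ ≤ t' → t' ≤ t → t' ∈ s := by
    intro t ht t' h1 h2
    exact ⟨h1, lt_of_le_of_lt (by exact_mod_cast h2) ht.2⟩
  have hyc : ∀ t ∈ s, ContinuousWithinAt y s t := fun t ht => ((hsol t ht).1).continuousWithinAt
  have hwc : ∀ t ∈ s, ContinuousWithinAt w s t := fun t ht => ((hsol t ht).2).continuousWithinAt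
  have hwpos : ∀ q ∈ regionR N m α β, 0 < q.2 := by
    intro q hq
    have h2 : 0 < 2 - (m - 1) * q.1 := by
      have h21 := (lt_div_iff₀ hm1).1 (lt_of_lt_of_le hq.2.1 (le_refl _) |>.trans hi)
      have h22 := mul_lt_mul_of_pos_left hq.2.1 hm1
      nlinarith
    nlinarith [(hVF q hq).2]
  by_contra hcon
  push_neg at hcon
  obtain ⟨x, hxs, hxbad⟩ := hcon
  set B : Set ℝ := {t | t ∈ s ∧ (y t, w t) ∉ regionR N m α β} with hB
  have hBne : x ∈ B := ⟨hxs, hxbad⟩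
  have hBbd : BddBelow B := ⟨t₀, fun t ht => ht.1.1⟩
  set t₁ := sInf B with ht₁
  have ht₁lb : t₀ ≤ t₁ := le_csInf ⟨x, hBne⟩ fun t ht => ht.1.1
  have ht₁x : t₁ ≤ x := csInf_le hBbd hBne
  have ht₁s : t₁ ∈ s := hseg x hxs t₁ ht₁lb ht₁x
  have hgood : ∀ t, t₀ ≤ t → t < t₁ → (y t, w t) ∈ regionR N m α β := by
    intro t h1 h2
    by_contra hbad
    have : t₁ ≤ t := csInf_le hBbd ⟨hseg x hxs t h1 (h2.le.trans ht₁x), hbad⟩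
    linarith
  have hbad₁ : (y t₁, w t₁) ∉ regionR N m α β := by
    by_contra hgood₁
    have hcont : ContinuousWithinAt (fun t => (y t, w t)) s t₁ :=
      (hyc t₁ ht₁s).prodMk (hwc t₁ ht₁s)
    have hER := aux_regionR_open (N := N) (m := m) (α := α) (β := β)
    have hmemE : (y t₁, w t₁) ∈ {q : ℝ × ℝ | 0 < q.1 ∧ q.1 < α / β ∧
        m * q.1 ^ 2 + ((N : ℝ) - 2) * q.1 < (1 - β / α * q.1) * q.2} :=
      (aux_regionR_iff hα0 hβ0 _).1 hgood₁
    have hpre := hcont.preimage_mem_nhdsWithin (hER.mem_nhds hmemE)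
    rw [mem_nhdsWithin] at hpre
    obtain ⟨U, hUopen, hUmem, hUsub⟩ := hpre
    obtain ⟨δ, hδ, hball⟩ := Metric.isOpen_iff.1 hUopen t₁ hUmem
    obtain ⟨tb, htbB, htblt⟩ := (csInf_lt_iff hBbd ⟨x, hBne⟩).1
      (show sInf B < t₁ + δ by rw [← ht₁]; linarith)
    have htb1 : t₁ ≤ tb := csInf_le hBbd htbB
    have htbU : tb ∈ U := hball (by
      rw [Metric.mem_ball, Real.dist_eq, abs_lt]
      constructor <;> linarith)
    have := hUsub ⟨htbU, htbB.1⟩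
    exact htbB.2 ((aux_regionR_iff hα0 hβ0 _).2 this)
  have ht₀₁ : t₀ < t₁ := lt_of_le_of_ne ht₁lb fun h => hbad₁ (h ▸ hmem)
  have hIoo_sub : Ioo t₀ t₁ ⊆ s := fun t ht => hseg t₁ ht₁s t ht.1.le ht.2.le
  have hIcc_sub : Icc t₀ t₁ ⊆ s := fun t ht => hseg t₁ ht₁s t ht.1 ht.2
  have hgood' : ∀ t ∈ Ioo t₀ t₁, (y t, w t) ∈ regionR N m α β := fun t ht =>
    hgood t ht.1.le ht.2
  haveI : (𝓝[Ioo t₀ t₁] t₁).NeBot := right_nhdsWithin_Ioo_neBot ht₀₁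
  have hy1 : Tendsto y (𝓝[Ioo t₀ t₁] t₁) (𝓝 (y t₁)) :=
    (hyc t₁ ht₁s).mono_left (nhdsWithin_mono _ hIoo_sub)
  have hw1 : Tendsto w (𝓝[Ioo t₀ t₁] t₁) (𝓝 (w t₁)) :=
    (hwc t₁ ht₁s).mono_left (nhdsWithin_mono _ hIoo_sub)
  have h0le : 0 ≤ y t₁ := ge_of_tendsto hy1 (by
    filter_upwards [self_mem_nhdsWithin] with t ht
    exact (hgood' t ht).1.le)
  have hrle : y t₁ ≤ α / β := le_of_tendsto hy1 (by
    filter_upwards [self_mem_nhdsWithin] with t ht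
    exact (hgood' t ht).2.1.le)
  have hw₁pos : 0 < w t₁ := by
    have hw0 : 0 < w t₀ := hwpos _ hmem
    have hwsm : StrictMonoOn w (Icc t₀ t₁) := by
      apply strictMonoOn_of_deriv_pos (convex_Icc _ _)
      · exact fun t ht => (hwc t (hIcc_sub ht)).mono hIcc_sub
      · rw [interior_Icc]
        intro τ hτ
        have hDA : HasDerivAt w (w τ * (2 - (m - 1) * y τ)) τ :=
          ((hsol τ (hIoo_sub hτ)).2).hasDerivAt
            (mem_of_superset (isOpen_Ioo.mem_nhds hτ) hIoo_sub)
        rw [hDA.deriv]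
        exact (hVF _ (hgood' τ hτ)).2
    exact lt_trans hw0 (hwsm ⟨le_rfl, ht₀₁.le⟩ ⟨ht₀₁.le, le_rfl⟩ ht₀₁)
  obtain ⟨hdy, hdw⟩ := hsol t₁ ht₁s
  by_cases hA : 0 < y t₁
  · by_cases hBc : y t₁ < α / β
    · have hden : 0 < 1 - β / α * y t₁ := by
        have := mul_lt_mul_of_pos_left hBc hβαpos
        rw [hβα1] at this
        linarith
      have hC : (1 - β / α * y t₁) * w t₁ ≤ m * y t₁ ^ 2 + ((N : ℝ) - 2) * y t₁ := by
        by_contra hC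
        push_neg at hC
        exact hbad₁ ((aux_regionR_iff hα0 hβ0 _).2 ⟨hA, hBc, hC⟩)
      have hφ : Tendsto (fun t => (1 - β / α * y t) * w t -
          (m * y t ^ 2 + ((N : ℝ) - 2) * y t)) (𝓝[Ioo t₀ t₁] t₁)
          (𝓝 ((1 - β / α * y t₁) * w t₁ - (m * y t₁ ^ 2 + ((N : ℝ) - 2) * y t₁))) :=
        (((hy1.const_mul (β / α)).const_sub 1).mul hw1).sub
          (((hy1.pow 2).const_mul m).add (hy1.const_mul ((N : ℝ) - 2)))
      have hfle : 0 ≤ (1 - β / α * y t₁) * w t₁ - (m * y t₁ ^ 2 + ((N : ℝ) - 2) * y t₁) := by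
        refine ge_of_tendsto hφ ?_
        filter_upwards [self_mem_nhdsWithin] with t ht
        have := ((aux_regionR_iff hα0 hβ0 _).1 (hgood' t ht)).2.2
        linarith
      have heq0 : (1 - β / α * y t₁) * w t₁ - (m * y t₁ ^ 2 + ((N : ℝ) - 2) * y t₁) = 0 := by
        linarith
      have hf' := (((hdy.const_mul (β / α)).const_sub 1).mul hdw).sub
        (((hdy.pow 2).const_mul m).add (hdy.const_mul ((N : ℝ) - 2)))
      have hydot : -(((N : ℝ)) - 2) * y t₁ + w t₁ - m * y t₁ ^ 2 - β / α * y t₁ * w t₁ = 0 := by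
        nlinarith [heq0]
      have h2my : 0 < 2 - (m - 1) * y t₁ := by
        have h21 := (lt_div_iff₀ hm1).1 (lt_of_le_of_lt hrle hi)
        have h22 := mul_le_mul_of_nonneg_left hrle hm1.le
        nlinarith
      have hf2 : HasDerivWithinAt (fun t => (1 - β / α * y t) * w t -
          (m * y t ^ 2 + ((N : ℝ) - 2) * y t))
          ((1 - β / α * y t₁) * (w t₁ * (2 - (m - 1) * y t₁))) s t₁ := by
        refine hf'.congr_deriv (Eq.symm ?_)
        push_cast
        linear_combination (β / α * w t₁ + 2 * m * y t₁ + (((N : ℝ)) - 2)) * hydot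
      refine aux_no_touch ht₀₁ hIoo_sub hf2 ?_ heq0 ?_
      · intro t ht
        show 0 < (1 - β / α * y t) * w t - (m * y t ^ 2 + ((N : ℝ) - 2) * y t)
        have := ((aux_regionR_iff hα0 hβ0 _).1 (hgood' t ht)).2.2
        linarith
      · exact mul_pos hden (mul_pos hw₁pos h2my)
    · have heqy : y t₁ = α / β := le_antisymm hrle (not_lt.1 hBc)
      have hYval : -(((N : ℝ)) - 2) * y t₁ + w t₁ - m * y t₁ ^ 2 - β / α * y t₁ * w t₁
          = -(((N : ℝ) - 2) * (α / β)) - m * (α / β) ^ 2 := by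
        rw [heqy]
        field_simp
        ring
      have hd0 : 0 < -(-(((N : ℝ)) - 2) * y t₁ + w t₁ - m * y t₁ ^ 2 - β / α * y t₁ * w t₁) := by
        rw [hYval]
        have h1 : 0 < m * (α / β) ^ 2 := by positivity
        have h2 : 0 ≤ ((N : ℝ) - 2) * (α / β) := mul_nonneg (by linarith) hr0.le
        linarith
      refine aux_no_touch ht₀₁ hIoo_sub (hdy.const_sub (α / β)) ?_ (by simp [heqy]) hd0
      intro t ht
      show 0 < α / β - y t
      have := (hgood' t ht).2.1
      linarith
  · have heqy : y t₁ = 0 := le_antisymm (not_lt.1 hA) h0le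
    have hd0 : 0 < -(((N : ℝ)) - 2) * y t₁ + w t₁ - m * y t₁ ^ 2 - β / α * y t₁ * w t₁ := by
      rw [heqy]
      ring_nf
      linarith [hw₁pos]
    refine aux_no_touch ht₀₁ hIoo_sub hdy ?_ heqy hd0
    exact fun t ht => (hgood' t ht).1

end

set_option maxHeartbeats 1600000 in
/-- **Invariant region analysis in the plane `{z = 0}`.**
(i) `α/β < 2/(m-1)`; (ii) the vector field points up-right in `R`;
(iii) `R` is positively invariant; (iv) along any maximal solution starting in
`R`, `w → +∞` at the right endpoint of the maximal interval of existence. -/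
theorem invariant_region_z_eq_zero
    (N : ℕ) (hN : 2 ≤ N) (m σ p α β : ℝ)
    (hm : 1 < m) (hσ1 : -2 < σ) (hσ2 : σ < 0)
    (hp1 : 1 < p) (hp2 : p < 1 - σ * (m - 1) / 2)
    (hα : α = -(σ + 2) / (σ * (m - 1) + 2 * (p - 1)))
    (hβ : β = -(m - p) / (σ * (m - 1) + 2 * (p - 1))) :
    (α / β < 2 / (m - 1)) ∧
    (∀ q ∈ regionR N m α β,
      0 < -(((N : ℝ)) - 2) * q.1 + q.2 - m * q.1 ^ 2 - β / α * q.1 * q.2 ∧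
      0 < q.2 * (2 - (m - 1) * q.1)) ∧
    (∀ (t₀ : ℝ) (b : EReal), (t₀ : EReal) < b → ∀ y w : ℝ → ℝ,
      IsSolYW N m α β (solDom t₀ b) y w → (y t₀, w t₀) ∈ regionR N m α β →
      (∀ t ∈ solDom t₀ b, (y t, w t) ∈ regionR N m α β) ∧
      (∀ t ∈ solDom t₀ b, y t < α / β)) ∧
    (∀ (t₀ : ℝ) (b : EReal), (t₀ : EReal) < b → ∀ y w : ℝ → ℝ,
      IsSolYW N m α β (solDom t₀ b) y w → (y t₀, w t₀) ∈ regionR N m α β →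
      (∀ b' : EReal, b < b' →
        ¬ ∃ y' w' : ℝ → ℝ, IsSolYW N m α β (solDom t₀ b') y' w' ∧
          Set.EqOn y' y (solDom t₀ b) ∧ Set.EqOn w' w (solDom t₀ b)) →
      (b = ⊤ → Tendsto w atTop atTop) ∧
      (∀ br : ℝ, b = (br : EReal) → Tendsto w (𝓝[<] br) atTop)) := by
  have hm1 : (0 : ℝ) < m - 1 := by linarith
  have hN2 : (2 : ℝ) ≤ (N : ℝ) := by exact_mod_cast hN
  have hD : σ * (m - 1) + 2 * (p - 1) < 0 := by nlinarith
  have hα0 : 0 < α := by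
    rw [hα]
    exact div_pos_iff.2 (Or.inr ⟨by linarith, hD⟩)
  have hmp : p < m := by nlinarith [mul_pos (show (0:ℝ) < σ + 2 by linarith) hm1]
  have hβ0 : 0 < β := by
    rw [hβ]
    exact div_pos_iff.2 (Or.inr ⟨by linarith, hD⟩)
  have hkey : α * (m - 1) - 2 * β = -1 := by
    have hDne : σ * (m - 1) + 2 * (p - 1) ≠ 0 := ne_of_lt hD
    rw [hα, hβ]
    field_simp
    ring
  have hi : α / β < 2 / (m - 1) := by
    rw [div_lt_div_iff₀ hβ0 hm1]
    linarith
  have hβα1 : β / α * (α / β) = 1 := by field_simp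
  have hβαpos : 0 < β / α := div_pos hβ0 hα0
  have hr0 : 0 < α / β := div_pos hα0 hβ0
  have hVF : ∀ q ∈ regionR N m α β,
      0 < -(((N : ℝ)) - 2) * q.1 + q.2 - m * q.1 ^ 2 - β / α * q.1 * q.2 ∧
      0 < q.2 * (2 - (m - 1) * q.1) := by
    intro q hq
    obtain ⟨h1, h2, h3'⟩ := (aux_regionR_iff hα0 hβ0 q).1 hq
    have hky : β / α * q.1 < 1 := by
      have := mul_lt_mul_of_pos_left h2 hβαpos
      rwa [hβα1] at this
    have hden : 0 < 1 - β / α * q.1 := by linarith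
    have hnum : 0 < m * q.1 ^ 2 + ((N : ℝ) - 2) * q.1 := by
      nlinarith [pow_pos h1 2, mul_nonneg (show (0:ℝ) ≤ (N:ℝ) - 2 by linarith) h1.le]
    have hq2 : 0 < q.2 := by nlinarith [lt_trans hnum h3']
    have h2my : 0 < 2 - (m - 1) * q.1 := by
      have h21 := (lt_div_iff₀ hm1).1 (lt_trans h2 hi)
      nlinarith
    exact ⟨by nlinarith [h3'], mul_pos hq2 h2my⟩
  have hwpos : ∀ q ∈ regionR N m α β, 0 < q.2 := by
    intro q hq
    have h2my : 0 < 2 - (m - 1) * q.1 := by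
      have h21 := (lt_div_iff₀ hm1).1 (lt_trans hq.2.1 hi)
      nlinarith
    nlinarith [(hVF q hq).2]
  have hinv := aux_invariance hN hm hα0 hβ0 hi hVF
  refine ⟨hi, hVF, fun t₀ b hb y w hsol hmem =>
    ⟨hinv t₀ b hb y w hsol hmem, fun t ht => (hinv t₀ b hb y w hsol hmem t ht).2.1⟩, ?_⟩
  intro t₀ b hb y w hsol hmem hmax
  have hreg := hinv t₀ b hb y w hsol hmem
  constructor
  · -- b = ⊤ : exponential (here linear) growth
    rintro rfl
    have hsEq : solDom t₀ (⊤ : EReal) = Ici t₀ := by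
      ext t
      simp [solDom, EReal.coe_lt_top]
    rw [hsEq] at hsol hreg
    have hw0 : 0 < w t₀ := hwpos _ hmem
    set c := 2 - (m - 1) * (α / β) with hc
    have hcpos : 0 < c := by
      have := (lt_div_iff₀ hm1).1 hi
      rw [hc]; nlinarith
    have hcont : ContinuousOn w (Ici t₀) := fun t ht => ((hsol t ht).2).continuousWithinAt
    have hDA : ∀ τ ∈ Ioi t₀, HasDerivAt w (w τ * (2 - (m - 1) * y τ)) τ := fun τ hτ =>
      ((hsol τ (mem_Ici.2 (le_of_lt hτ))).2).hasDerivAt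
        (mem_of_superset (isOpen_Ioi.mem_nhds hτ) Ioi_subset_Ici_self)
    have hwmono : MonotoneOn w (Ici t₀) := by
      apply monotoneOn_of_deriv_nonneg (convex_Ici t₀) hcont
      · rw [interior_Ici]
        exact fun τ hτ => (hDA τ hτ).differentiableAt.differentiableWithinAt
      · rw [interior_Ici]
        intro τ hτ
        rw [(hDA τ hτ).deriv]
        exact (hVF _ (hreg τ (mem_Ici.2 (le_of_lt hτ)))).2.le
    have hlin : ∀ t ∈ Ici t₀, w t₀ + c * w t₀ * (t - t₀) ≤ w t := by
      intro t ht
      have hhmono : MonotoneOn (fun t => w t - c * w t₀ * t) (Ici t₀) := by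
        apply monotoneOn_of_deriv_nonneg (convex_Ici t₀)
        · exact hcont.sub (Continuous.continuousOn (by fun_prop))
        · rw [interior_Ici]
          intro τ hτ
          have hder : HasDerivAt (fun t => w t - c * w t₀ * t) (w τ * (2 - (m - 1) * y τ)
              - c * w t₀) τ := by
            have h2 : HasDerivAt (fun t : ℝ => c * w t₀ * t) (c * w t₀) τ := by
              simpa using (hasDerivAt_id τ).const_mul (c * w t₀)
            exact (hDA τ hτ).sub h2
          exact hder.differentiableAt.differentiableWithinAt
        · rw [interior_Ici]
          intro τ hτ
          have h2 : HasDerivAt (fun t : ℝ => c * w t₀ * t) (c * w t₀) τ := by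
            simpa using (hasDerivAt_id τ).const_mul (c * w t₀)
          have hder := (hDA τ hτ).sub h2
          rw [show deriv (fun t => w t - c * w t₀ * t) τ = _ from hder.deriv]
          have hwτ : w t₀ ≤ w τ := hwmono self_mem_Ici (mem_Ici.2 (le_of_lt hτ)) (le_of_lt hτ)
          have hyτ : y τ < α / β := (hreg τ (mem_Ici.2 (le_of_lt hτ))).2.1
          have hwpos' : 0 < w τ := lt_of_lt_of_le hw0 hwτ
          have hcy : c ≤ 2 - (m - 1) * y τ := by rw [hc]; nlinarith
          nlinarith
      have h3 := hhmono self_mem_Ici ht ht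
      simp only at h3
      nlinarith [h3]
    have htend : Tendsto (fun t : ℝ => w t₀ + c * w t₀ * (t - t₀)) atTop atTop := by
      apply tendsto_atTop_add_const_left
      exact (tendsto_atTop_add_const_right _ _ tendsto_id).const_mul_atTop (mul_pos hcpos hw0)
    refine tendsto_atTop_mono' atTop ?_ htend
    filter_upwards [eventually_ge_atTop t₀] with t ht
    exact hlin t ht
  · -- b = br : blow-up or extension
    intro br hbr
    subst hbr
    have ht0br : t₀ < br := by exact_mod_cast hb
    have hsEq : solDom t₀ ((br : ℝ) : EReal) = Ico t₀ br := by
      ext t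
      simp [solDom, EReal.coe_lt_coe_iff, mem_Ico]
    rw [hsEq] at hsol hreg
    have hycont : ContinuousOn y (Ico t₀ br) := fun t ht => ((hsol t ht).1).continuousWithinAt
    have hwcont : ContinuousOn w (Ico t₀ br) := fun t ht => ((hsol t ht).2).continuousWithinAt
    have hyDA : ∀ τ ∈ Ioo t₀ br, HasDerivAt y
        (-(((N : ℝ)) - 2) * y τ + w τ - m * y τ ^ 2 - β / α * y τ * w τ) τ := fun τ hτ =>
      ((hsol τ (Ioo_subset_Ico_self hτ)).1).hasDerivAt
        (mem_of_superset (isOpen_Ioo.mem_nhds hτ) Ioo_subset_Ico_self)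
    have hwDA : ∀ τ ∈ Ioo t₀ br, HasDerivAt w (w τ * (2 - (m - 1) * y τ)) τ := fun τ hτ =>
      ((hsol τ (Ioo_subset_Ico_self hτ)).2).hasDerivAt
        (mem_of_superset (isOpen_Ioo.mem_nhds hτ) Ioo_subset_Ico_self)
    have hymono : MonotoneOn y (Ico t₀ br) := by
      apply monotoneOn_of_deriv_nonneg (convex_Ico t₀ br) hycont
      · rw [interior_Ico]
        exact fun τ hτ => (hyDA τ hτ).differentiableAt.differentiableWithinAt
      · rw [interior_Ico]
        intro τ hτ
        rw [(hyDA τ hτ).deriv]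
        exact (hVF _ (hreg τ (Ioo_subset_Ico_self hτ))).1.le
    have hwmono : MonotoneOn w (Ico t₀ br) := by
      apply monotoneOn_of_deriv_nonneg (convex_Ico t₀ br) hwcont
      · rw [interior_Ico]
        exact fun τ hτ => (hwDA τ hτ).differentiableAt.differentiableWithinAt
      · rw [interior_Ico]
        intro τ hτ
        rw [(hwDA τ hτ).deriv]
        exact (hVF _ (hreg τ (Ioo_subset_Ico_self hτ))).2.le
    by_cases hbdd : BddAbove (w '' Ico t₀ br)
    · -- bounded: we can extend the solution, contradiction
      exfalso
      obtain ⟨wb, hwtend, hwle⟩ := aux_mono_limit ht0br hwmono hbdd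
      have hybdd : BddAbove (y '' Ico t₀ br) :=
        ⟨α / β, by rintro _ ⟨t, ht, rfl⟩; exact ((hreg t ht).2.1).le⟩
      obtain ⟨yb, hytend, hyle⟩ := aux_mono_limit ht0br hymono hybdd
      set v : ℝ × ℝ → ℝ × ℝ := fun q =>
        (-(((N : ℝ)) - 2) * q.1 + q.2 - m * q.1 ^ 2 - β / α * q.1 * q.2,
          q.2 * (2 - (m - 1) * q.1)) with hv
      have hvC : ContDiff ℝ 1 v := by
        apply ContDiff.prodMk <;> fun_prop
      obtain ⟨ε, hε, L, RR, C, K, hr, hpl⟩ :=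
        IsPicardLindelof.of_contDiffAt_one (hvC.contDiffAt (x := (yb, wb)))
      obtain ⟨f, hf0, hf⟩ :=
        (hpl br).exists_eq_forall_mem_Icc_hasDerivWithinAt (Metric.mem_closedBall_self (by positivity))
      set Y : ℝ → ℝ := fun t => if t < br then y t else (f t).1 with hY
      set W : ℝ → ℝ := fun t => if t < br then w t else (f t).2 with hW
      have hYlt : ∀ t, t < br → Y t = y t := fun t h => if_pos h
      have hYge : ∀ t, br ≤ t → Y t = (f t).1 := fun t h => if_neg (not_lt.2 h)
      have hWlt : ∀ t, t < br → W t = w t := fun t h => if_pos h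
      have hWge : ∀ t, br ≤ t → W t = (f t).2 := fun t h => if_neg (not_lt.2 h)
      have hYbr : Y br = yb := by rw [hYge br le_rfl, hf0]
      have hWbr : W br = wb := by rw [hWge br le_rfl, hf0]
      set dY : ℝ → ℝ := fun t =>
        -(((N : ℝ)) - 2) * Y t + W t - m * Y t ^ 2 - β / α * Y t * W t with hdY
      set dW : ℝ → ℝ := fun t => W t * (2 - (m - 1) * Y t) with hdW
      have hEqY : EqOn Y y (Ico t₀ br) := fun t ht => hYlt t ht.2
      have hEqW : EqOn W w (Ico t₀ br) := fun t ht => hWlt t ht.2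
      have huY : ∀ t ∈ Ico t₀ br, HasDerivWithinAt Y (dY t) (Ico t₀ br) t := by
        intro t ht
        have hval : dY t = -(((N : ℝ)) - 2) * y t + w t - m * y t ^ 2 - β / α * y t * w t := by
          rw [hdY]
          simp only
          rw [hYlt t ht.2, hWlt t ht.2]
        rw [hval]
        exact ((hsol t ht).1).congr hEqY (hEqY ht)
      have huW : ∀ t ∈ Ico t₀ br, HasDerivWithinAt W (dW t) (Ico t₀ br) t := by
        intro t ht
        have hval : dW t = w t * (2 - (m - 1) * y t) := by
          rw [hdW]
          simp only
          rw [hYlt t ht.2, hWlt t ht.2]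
        rw [hval]
        exact ((hsol t ht).2).congr hEqW (hEqW ht)
      have hulimY : Tendsto Y (𝓝[<] br) (𝓝 (Y br)) := by
        rw [hYbr]
        refine hytend.congr' ?_
        filter_upwards [self_mem_nhdsWithin] with t ht
        exact (hYlt t ht).symm
      have hulimW : Tendsto W (𝓝[<] br) (𝓝 (W br)) := by
        rw [hWbr]
        refine hwtend.congr' ?_
        filter_upwards [self_mem_nhdsWithin] with t ht
        exact (hWlt t ht).symm
      have hdlimY : Tendsto dY (𝓝[<] br) (𝓝 (dY br)) := by
        have hform : Tendsto (fun t => -(((N : ℝ)) - 2) * y t + w t - m * y t ^ 2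
            - β / α * y t * w t) (𝓝[<] br)
            (𝓝 (-(((N : ℝ)) - 2) * yb + wb - m * yb ^ 2 - β / α * yb * wb)) :=
          (((hytend.const_mul (-(((N : ℝ)) - 2))).add hwtend).sub
            ((hytend.pow 2).const_mul m)).sub ((hytend.const_mul (β / α)).mul hwtend)
        have hval : dY br = -(((N : ℝ)) - 2) * yb + wb - m * yb ^ 2 - β / α * yb * wb := by
          rw [hdY]; simp only; rw [hYbr, hWbr]
        rw [hval]
        refine hform.congr' ?_
        filter_upwards [self_mem_nhdsWithin] with t ht
        rw [hdY]; simp only; rw [hYlt t ht, hWlt t ht]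
      have hdlimW : Tendsto dW (𝓝[<] br) (𝓝 (dW br)) := by
        have hform : Tendsto (fun t => w t * (2 - (m - 1) * y t)) (𝓝[<] br)
            (𝓝 (wb * (2 - (m - 1) * yb))) :=
          hwtend.mul ((hytend.const_mul (m - 1)).const_sub 2)
        have hval : dW br = wb * (2 - (m - 1) * yb) := by
          rw [hdW]; simp only; rw [hYbr, hWbr]
        rw [hval]
        refine hform.congr' ?_
        filter_upwards [self_mem_nhdsWithin] with t ht
        rw [hdW]; simp only; rw [hYlt t ht, hWlt t ht]
      have hIccsub : Icc br (br + ε) ⊆ Icc (br - ε) (br + ε) := Icc_subset_Icc_left (by linarith)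
      have hgY : ∀ t ∈ Icc br (br + ε), HasDerivWithinAt Y (dY t) (Icc br (br + ε)) t := by
        intro t ht
        have h1 := (hf t (hIccsub ht)).mono hIccsub
        have h2 : HasDerivWithinAt (fun τ => (f τ).1) ((v (f t)).1) (Icc br (br + ε)) t := by
          have := (hasFDerivAt_fst (𝕜 := ℝ) (E := ℝ) (F := ℝ)).comp_hasDerivWithinAt t h1
          simp at this
          exact this
        have h3 : HasDerivWithinAt Y ((v (f t)).1) (Icc br (br + ε)) t :=
          h2.congr (fun τ hτ => hYge τ hτ.1) (hYge t ht.1)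
        have hval : dY t = (v (f t)).1 := by
          rw [hdY, hv]; simp only; rw [hYge t ht.1, hWge t ht.1]
        rw [hval]
        exact h3
      have hgW : ∀ t ∈ Icc br (br + ε), HasDerivWithinAt W (dW t) (Icc br (br + ε)) t := by
        intro t ht
        have h1 := (hf t (hIccsub ht)).mono hIccsub
        have h2 : HasDerivWithinAt (fun τ => (f τ).2) ((v (f t)).2) (Icc br (br + ε)) t := by
          have := (hasFDerivAt_snd (𝕜 := ℝ) (E := ℝ) (F := ℝ)).comp_hasDerivWithinAt t h1
          simp at this
          exact this
        have h3 : HasDerivWithinAt W ((v (f t)).2) (Icc br (br + ε)) t :=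
          h2.congr (fun τ hτ => hWge τ hτ.1) (hWge t ht.1)
        have hval : dW t = (v (f t)).2 := by
          rw [hdW, hv]; simp only; rw [hYge t ht.1, hWge t ht.1]
        rw [hval]
        exact h3
      have hglueY := aux_glue ht0br hε huY hulimY hdlimY hgY
      have hglueW := aux_glue ht0br hε huW hulimW hdlimW hgW
      have hb' : ((br : ℝ) : EReal) < (((br + ε : ℝ)) : EReal) := by
        exact_mod_cast (by linarith : br < br + ε)
      apply hmax _ hb'
      have hsEq' : solDom t₀ ((br + ε : ℝ) : EReal) = Ico t₀ (br + ε) := by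
        ext t
        simp only [solDom, mem_setOf_eq, mem_Ico, ← EReal.coe_add, EReal.coe_lt_coe_iff]
      refine ⟨Y, W, ?_, ?_, ?_⟩
      · intro t ht
        rw [hsEq'] at ht
        constructor
        · have := hglueY t ht
          rw [hdY] at this
          simp only at this
          rw [← hsEq'] at this
          exact this
        · have := hglueW t ht
          rw [hdW] at this
          simp only at this
          rw [← hsEq'] at this
          exact this
      · intro t ht
        rw [hsEq] at ht
        exact hYlt t ht.2
      · intro t ht
        rw [hsEq] at ht
        exact hWlt t ht.2
    · -- unbounded: w tends to infinity
      rw [not_bddAbove_iff] at hbdd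
      rw [tendsto_atTop]
      intro M
      obtain ⟨_, ⟨ts, hts, rfl⟩, hMlt⟩ := hbdd M
      filter_upwards [Ioo_mem_nhdsLT hts.2] with t ht
      have hle : w ts ≤ w t := hwmono hts ⟨hts.1.trans ht.1.le, ht.2⟩ ht.1.le
      linarith
end

section
/- Let N ≥ 2 be an integer, m > 1, σ ∈ (−2, 0) and 1 ≤ p < m. Let f be a positive, continuously differentiable function on an interval (0, δ) such that lim_{ξ→0⁺} m ξ^{−(1+σ)} f(ξ)^{m−p−1} f'(ξ) = −1/(N+σ), and suppose f is bounded away from 0 near ξ = 0 (i.e. liminf_{ξ→0⁺} f(ξ) > 0). Then the limit D := lim_{ξ→0⁺} f(ξ)^{m−p} exists, is finite and positive, and lim_{ξ→0⁺} (D − f(ξ)^{m−p})/ξ^{σ+2} = (m−p)/(m(N+σ)(σ+2)); that is, f has the local behavior f(ξ) ∼ [D − ((m−p)/(m(N+σ)(σ+2))) ξ^{σ+2}]^{1/(m−p)} as ξ → 0⁺. -/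
open Real Filter Set Topology

/-- Auxiliary algebraic identity used in the derivative computation. -/
lemma beh_Q1_aux_alg (m σ p X W F G Nσ : ℝ) (hm : 0 < m) (hN : 0 < Nσ)
    (hσ : 0 < σ + 2) (e2 : X * W = 1) :
    (m - p)/m * X * (m * W * F * G + 1/Nσ)
      = G * (m - p) * F + (m - p) / (m * Nσ * (σ + 2)) * ((σ + 2) * X) := by
  have hm' : m ≠ 0 := ne_of_gt hm
  have hN' : Nσ ≠ 0 := ne_of_gt hN
  have hσ' : σ + 2 ≠ 0 := ne_of_gt hσ
  field_simp
  linear_combination (F*G*Nσ*(m^2 - m*p)) * e2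

/-- **Local behavior (beh.Q1) from the phase-space asymptotics `Y/Z → -1/(N+σ)`.**
If `f` is positive, `C¹` on `(0, δ)`, bounded away from `0` near `ξ = 0`, and
`m ξ^{-(1+σ)} f(ξ)^{m-p-1} f'(ξ) → -1/(N+σ)` as `ξ → 0⁺`, then
`D = lim_{ξ→0⁺} f(ξ)^{m-p}` exists, is finite and positive, and
`(D - f(ξ)^{m-p})/ξ^{σ+2} → (m-p)/(m(N+σ)(σ+2))` as `ξ → 0⁺`. -/
theorem local_behavior_from_YZ_limit
    (N : ℕ) (hN : 2 ≤ N) (m σ p : ℝ)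
    (hm : 1 < m) (hσ1 : -2 < σ) (hσ2 : σ < 0)
    (hp1 : 1 ≤ p) (hpm : p < m)
    (δ : ℝ) (hδ : 0 < δ) (f : ℝ → ℝ)
    (hf1 : ContDiffOn ℝ 1 f (Set.Ioo 0 δ))
    (hfpos : ∀ ξ ∈ Set.Ioo 0 δ, 0 < f ξ)
    (hlim : Tendsto (fun ξ => m * ξ ^ (-(1 + σ)) * f ξ ^ (m - p - 1) * deriv f ξ)
      (𝓝[>] 0) (𝓝 (-1 / ((N : ℝ) + σ))))
    (hbdd : ∃ c > (0 : ℝ), ∀ᶠ ξ in 𝓝[>] (0 : ℝ), c ≤ f ξ) :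
    ∃ D : ℝ, 0 < D ∧
      Tendsto (fun ξ => f ξ ^ (m - p)) (𝓝[>] 0) (𝓝 D) ∧
      Tendsto (fun ξ => (D - f ξ ^ (m - p)) / ξ ^ (σ + 2)) (𝓝[>] 0)
        (𝓝 ((m - p) / (m * ((N : ℝ) + σ) * (σ + 2)))) := by
  have hm0 : (0:ℝ) < m := lt_trans one_pos hm
  have hmp : (0:ℝ) < m - p := sub_pos.2 hpm
  have hσ2' : (0:ℝ) < σ + 2 := by linarith
  have hNσ : (0:ℝ) < (N:ℝ) + σ := by
    have h2 : (2:ℝ) ≤ (N:ℝ) := by exact_mod_cast hN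
    linarith
  set L : ℝ := (m - p) / (m * ((N:ℝ) + σ) * (σ + 2)) with hLdef
  have hL : 0 < L := div_pos hmp (by positivity)
  set H : ℝ → ℝ := fun ξ => m * ξ ^ (-(1 + σ)) * f ξ ^ (m - p - 1) * deriv f ξ with hHdef
  set φ : ℝ → ℝ := fun ξ => f ξ ^ (m - p) + L * ξ ^ (σ + 2) with hφdef
  -- derivative of φ on (0, δ)
  have hderiv : ∀ ξ ∈ Ioo (0:ℝ) δ,
      HasDerivAt φ ((m - p)/m * ξ ^ (σ + 1) * (H ξ + 1/((N:ℝ) + σ))) ξ := by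
    intro ξ hξ
    have hfd : DifferentiableAt ℝ f ξ :=
      (hf1.differentiableOn one_ne_zero).differentiableAt (Ioo_mem_nhds hξ.1 hξ.2)
    have h1 : HasDerivAt (fun x => f x ^ (m - p))
        (deriv f ξ * (m - p) * f ξ ^ (m - p - 1)) ξ :=
      hfd.hasDerivAt.rpow_const (Or.inl (ne_of_gt (hfpos ξ hξ)))
    have h2 : HasDerivAt (fun x : ℝ => x ^ (σ + 2)) ((σ + 2) * ξ ^ (σ + 2 - 1)) ξ :=
      Real.hasDerivAt_rpow_const (Or.inl (ne_of_gt hξ.1))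
    have h3 := h1.add (h2.const_mul L)
    refine h3.congr_deriv (Eq.symm ?_)
    have e1 : σ + 2 - 1 = σ + 1 := by ring
    have e2 : ξ ^ (σ + 1) * ξ ^ (-(1 + σ)) = 1 := by
      rw [← Real.rpow_add hξ.1, show σ + 1 + -(1 + σ) = (0:ℝ) by ring, Real.rpow_zero]
    rw [e1, hHdef, hLdef]
    exact beh_Q1_aux_alg m σ p (ξ ^ (σ + 1)) (ξ ^ (-(1 + σ))) (f ξ ^ (m - p - 1))
      (deriv f ξ) ((N:ℝ) + σ) hm0 hNσ hσ2' e2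
  -- Key ε-estimate
  have key : ∀ ε > (0:ℝ), ∃ a, 0 < a ∧ a ≤ δ ∧ ∀ ξ ∈ Ioo (0:ℝ) a, ∀ η ∈ Ioo (0:ℝ) a,
      ξ ≤ η → |φ η - φ ξ| ≤ ε * η ^ (σ + 2) := by
    intro ε hε
    set ε' : ℝ := ε * (σ + 2) * m / (m - p) with hε'def
    have hε' : 0 < ε' := by positivity
    have hev : ∀ᶠ ξ in 𝓝[>] (0:ℝ), |H ξ - (-1/((N:ℝ) + σ))| < ε' := by
      have h := Metric.tendsto_nhds.1 hlim ε' hε'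
      simpa [Real.dist_eq] using h
    obtain ⟨b, hb0, hb⟩ := (nhdsGT_basis (0:ℝ)).eventually_iff.1 hev
    set a := min b δ with hadef
    refine ⟨a, lt_min hb0 hδ, min_le_right _ _, ?_⟩
    -- derivative bound on (0, a)
    have hbd : ∀ x ∈ Ioo (0:ℝ) a,
        |(m - p)/m * x ^ (σ + 1) * (H x + 1/((N:ℝ) + σ))| ≤ ε * (σ + 2) * x ^ (σ + 1) := by
      intro x hx
      have hxb : x ∈ Ioo (0:ℝ) b := ⟨hx.1, lt_of_lt_of_le hx.2 (min_le_left _ _)⟩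
      have h5 : |H x + 1/((N:ℝ) + σ)| < ε' := by
        have := hb hxb
        have e : H x - (-1/((N:ℝ) + σ)) = H x + 1/((N:ℝ) + σ) := by ring
        rwa [e] at this
      have hxp : (0:ℝ) < x ^ (σ + 1) := Real.rpow_pos_of_pos hx.1 _
      have hc : (0:ℝ) ≤ (m - p)/m * x ^ (σ + 1) := by positivity
      calc |(m - p)/m * x ^ (σ + 1) * (H x + 1/((N:ℝ) + σ))|
          = (m - p)/m * x ^ (σ + 1) * |H x + 1/((N:ℝ) + σ)| := by
            rw [abs_mul, abs_of_nonneg hc]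
        _ ≤ (m - p)/m * x ^ (σ + 1) * ε' := by
            exact mul_le_mul_of_nonneg_left h5.le hc
        _ = ε * (σ + 2) * x ^ (σ + 1) := by
            rw [hε'def]; field_simp
    -- monotone comparison functions
    have hmono : ∀ s : ℝ, |s| = 1 →
        MonotoneOn (fun x => ε * x ^ (σ + 2) + s * φ x) (Ioo (0:ℝ) a) := by
      intro s hs
      have hda : ∀ x ∈ Ioo (0:ℝ) a, HasDerivAt (fun x => ε * x ^ (σ + 2) + s * φ x)
          (ε * ((σ + 2) * x ^ (σ + 2 - 1)) +
            s * ((m - p)/m * x ^ (σ + 1) * (H x + 1/((N:ℝ) + σ)))) x := by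
        intro x hx
        have hx' : x ∈ Ioo (0:ℝ) δ := ⟨hx.1, lt_of_lt_of_le hx.2 (min_le_right _ _)⟩
        exact ((Real.hasDerivAt_rpow_const (Or.inl (ne_of_gt hx.1))).const_mul ε).add
          ((hderiv x hx').const_mul s)
      apply monotoneOn_of_deriv_nonneg (convex_Ioo _ _)
      · exact fun x hx => ((hda x hx).continuousAt).continuousWithinAt
      · intro x hx
        rw [interior_Ioo] at hx
        exact ((hda x hx).differentiableAt).differentiableWithinAt
      · intro x hx
        rw [interior_Ioo] at hx
        rw [(hda x hx).deriv]
        have e1 : σ + 2 - 1 = σ + 1 := by ring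
        rw [e1]
        have h6 := hbd x hx
        have h7 : |s * ((m - p)/m * x ^ (σ + 1) * (H x + 1/((N:ℝ) + σ)))|
            = |(m - p)/m * x ^ (σ + 1) * (H x + 1/((N:ℝ) + σ))| := by
          rw [abs_mul, hs, one_mul]
        have h8 := neg_abs_le (s * ((m - p)/m * x ^ (σ + 1) * (H x + 1/((N:ℝ) + σ))))
        rw [h7] at h8
        nlinarith [h8, h6]
    intro ξ hξ η hη hle
    have h1 := hmono 1 (by norm_num) hξ hη hle
    have h2 := hmono (-1) (by norm_num) hξ hη hle
    simp only [one_mul, neg_one_mul] at h1 h2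
    have hξp : (0:ℝ) ≤ ξ ^ (σ + 2) := (Real.rpow_pos_of_pos hξ.1 _).le
    rw [abs_le]
    constructor <;> nlinarith [h1, h2, mul_nonneg hε.le hξp]
  -- ξ^(σ+2) → 0
  have hψ0 : Tendsto (fun ξ : ℝ => ξ ^ (σ + 2)) (𝓝[>] (0:ℝ)) (𝓝 0) := by
    have h := (Real.continuousAt_rpow_const 0 (σ + 2) (Or.inr hσ2'.le)).tendsto
    rw [Real.zero_rpow (ne_of_gt hσ2')] at h
    exact h.mono_left nhdsWithin_le_nhds
  -- Cauchy, hence φ converges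
  have hC : Cauchy (Filter.map φ (𝓝[>] (0:ℝ))) := by
    refine Metric.cauchy_iff.2 ⟨Filter.map_neBot, fun ε hε => ?_⟩
    obtain ⟨a, ha0, haδ, hK⟩ := key (ε/3) (by positivity)
    set a' := min a 1 with ha'def
    have ha' : (0:ℝ) < a' := lt_min ha0 one_pos
    refine ⟨φ '' Ioo 0 a',
      image_mem_map (Ioo_mem_nhdsGT_of_mem ⟨le_refl 0, ha'⟩), ?_⟩
    have key2 : ∀ u v : ℝ, u ∈ Ioo (0:ℝ) a' → v ∈ Ioo (0:ℝ) a' → u ≤ v →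
        dist (φ u) (φ v) < ε := by
      intro u v hu hv huv
      rw [Real.dist_eq]
      have hva : v ∈ Ioo (0:ℝ) a := ⟨hv.1, lt_of_lt_of_le hv.2 (min_le_left _ _)⟩
      have hua : u ∈ Ioo (0:ℝ) a := ⟨hu.1, lt_of_lt_of_le hu.2 (min_le_left _ _)⟩
      have h1 := hK u hua v hva huv
      have hv1 : v ^ (σ + 2) ≤ 1 :=
        Real.rpow_le_one hv.1.le (le_of_lt (lt_of_lt_of_le hv.2 (min_le_right _ _))) hσ2'.le
      calc |φ u - φ v| = |φ v - φ u| := abs_sub_comm _ _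
        _ ≤ ε/3 * v ^ (σ + 2) := h1
        _ ≤ ε/3 * 1 := mul_le_mul_of_nonneg_left hv1 (by positivity)
        _ < ε := by linarith
    rintro _ ⟨x, hx, rfl⟩ _ ⟨y, hy, rfl⟩
    rcases le_total x y with h | h
    · exact key2 x y hx hy h
    · rw [dist_comm]; exact key2 y x hy hx h
  obtain ⟨D, hD⟩ := CompleteSpace.complete hC
  have hφD : Tendsto φ (𝓝[>] (0:ℝ)) (𝓝 D) := hD
  have hgD : Tendsto (fun ξ => f ξ ^ (m - p)) (𝓝[>] (0:ℝ)) (𝓝 D) := by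
    have h := hφD.sub (hψ0.const_mul L)
    have he : (fun ξ => f ξ ^ (m - p)) = fun ξ => φ ξ - L * ξ ^ (σ + 2) := by
      funext ξ; simp [hφdef]
    rw [he]
    simpa using h
  -- positivity of D
  obtain ⟨c, hc, hcf⟩ := hbdd
  have hDpos : 0 < D := by
    have hle : c ^ (m - p) ≤ D := by
      refine ge_of_tendsto hgD ?_
      filter_upwards [hcf] with ξ h
      exact Real.rpow_le_rpow hc.le h hmp.le
    exact lt_of_lt_of_le (Real.rpow_pos_of_pos hc _) hle
  refine ⟨D, hDpos, hgD, ?_⟩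
  -- final limit
  rw [Metric.tendsto_nhds]
  intro ε hε
  obtain ⟨a, ha0, haδ, hK⟩ := key (ε/2) (by positivity)
  filter_upwards [Ioo_mem_nhdsGT_of_mem (⟨le_refl 0, ha0⟩ : (0:ℝ) ∈ Ico 0 a)] with ξ hξ
  have hξpos : (0:ℝ) < ξ := hξ.1
  have hψpos : (0:ℝ) < ξ ^ (σ + 2) := Real.rpow_pos_of_pos hξpos _
  have hbound : |φ ξ - D| ≤ ε/2 * ξ ^ (σ + 2) := by
    have htend : Tendsto (fun η => |φ ξ - φ η|) (𝓝[>] (0:ℝ)) (𝓝 |φ ξ - D|) :=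
      (tendsto_const_nhds.sub hφD).abs
    refine le_of_tendsto htend ?_
    filter_upwards [Ioo_mem_nhdsGT_of_mem
      (⟨le_refl 0, lt_min hξpos ha0⟩ : (0:ℝ) ∈ Ico 0 (min ξ a))] with η hη
    have hηa : η ∈ Ioo (0:ℝ) a := ⟨hη.1, lt_of_lt_of_le hη.2 (min_le_right _ _)⟩
    exact hK η hηa ξ hξ (le_of_lt (lt_of_lt_of_le hη.2 (min_le_left _ _)))
  rw [Real.dist_eq]
  have hrw : (D - f ξ ^ (m - p)) / ξ ^ (σ + 2) - L = (D - φ ξ) / ξ ^ (σ + 2) := by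
    rw [hφdef]
    field_simp
    ring
  rw [hrw, abs_div, abs_of_pos hψpos]
  have habs : |D - φ ξ| ≤ ε/2 * ξ ^ (σ + 2) := by rwa [abs_sub_comm] at hbound
  have hfin : |D - φ ξ| / ξ ^ (σ + 2) ≤ ε/2 := by
    rw [div_le_iff₀ hψpos]
    exact habs
  linarith
end

section
/- Let m > 1 and β > 0. Let ξ₀ > 0 and let f be a positive, continuously differentiable function on an interval (ξ₁, ξ₀) with lim_{ξ→ξ₀⁻} f(ξ) = 0 and lim_{ξ→ξ₀⁻} m f(ξ)^{m−2} f'(ξ)/ξ = −β. Then lim_{ξ→ξ₀⁻} f(ξ)^{m−1}/(ξ₀² − ξ²) = β(m−1)/(2m); equivalently, setting C := β(m−1)ξ₀²/(2m), one has f(ξ) ∼ [C − (β(m−1)/(2m)) ξ²]^{1/(m−1)} as ξ → ξ₀⁻. In particular lim_{ξ→ξ₀⁻} (f^m)'(ξ) = 0, so f satisfies the interface contact condition at ξ₀. -/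
open Real Filter Set Topology

/-- **Interface behavior near `P₁`.** If `f > 0` is `C¹` on `(ξ₁, ξ₀)`,
`f(ξ) → 0` and `m f(ξ)^{m-2} f'(ξ)/ξ → -β` as `ξ → ξ₀⁻`, then
`f(ξ)^{m-1}/(ξ₀² - ξ²) → β(m-1)/(2m)` as `ξ → ξ₀⁻` (that is,
`f(ξ) ∼ [C - (β(m-1)/(2m)) ξ²]^{1/(m-1)}` with `C = β(m-1)ξ₀²/(2m)`), and in
particular `(f^m)'(ξ) → 0` as `ξ → ξ₀⁻`, so `f` satisfies the interface
contact condition at `ξ₀`. -/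
theorem interface_behavior
    (m β : ℝ) (hm : 1 < m) (hβ : 0 < β)
    (ξ₀ ξ₁ : ℝ) (hξ₀ : 0 < ξ₀) (hξ₁ : ξ₁ < ξ₀)
    (f : ℝ → ℝ)
    (hf1 : ContDiffOn ℝ 1 f (Set.Ioo ξ₁ ξ₀))
    (hfpos : ∀ ξ ∈ Set.Ioo ξ₁ ξ₀, 0 < f ξ)
    (hf0 : Tendsto f (𝓝[<] ξ₀) (𝓝 0))
    (hslope : Tendsto (fun ξ => m * f ξ ^ (m - 2) * deriv f ξ / ξ)
      (𝓝[<] ξ₀) (𝓝 (-β))) :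
    Tendsto (fun ξ => f ξ ^ (m - 1) / (ξ₀ ^ 2 - ξ ^ 2)) (𝓝[<] ξ₀)
      (𝓝 (β * (m - 1) / (2 * m))) ∧
    Tendsto (fun ξ => deriv (fun x => f x ^ m) ξ) (𝓝[<] ξ₀) (𝓝 0) := by
  have hm0 : m ≠ 0 := by linarith
  set a : ℝ := max ξ₁ (ξ₀ / 2) with ha
  have haξ₀ : a < ξ₀ := by
    apply max_lt hξ₁ (by linarith)
  have hmemIoo : Ioo a ξ₀ ∈ 𝓝[<] ξ₀ := Ioo_mem_nhdsLT_of_mem ⟨haξ₀, le_rfl⟩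
  have hev : ∀ᶠ x in 𝓝[<] ξ₀, x ∈ Ioo ξ₁ ξ₀ ∧ 0 < x := by
    filter_upwards [hmemIoo] with x hx
    refine ⟨⟨lt_of_le_of_lt (le_max_left _ _) hx.1, hx.2⟩, ?_⟩
    have := lt_of_le_of_lt (le_max_right _ _) hx.1
    linarith
  -- differentiability of f
  have hdf : ∀ x ∈ Ioo ξ₁ ξ₀, HasDerivAt f (deriv f x) x := by
    intro x hx
    exact ((hf1.differentiableOn one_ne_zero).differentiableAt
      (isOpen_Ioo.mem_nhds hx)).hasDerivAt
  -- Part 1 via L'Hôpital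
  have h1 : Tendsto (fun ξ => f ξ ^ (m - 1) / (ξ₀ ^ 2 - ξ ^ 2)) (𝓝[<] ξ₀)
      (𝓝 (β * (m - 1) / (2 * m))) := by
    apply HasDerivAt.lhopital_zero_nhdsLT
      (f' := fun x => (m - 1) * f x ^ (m - 2) * deriv f x)
      (g' := fun x => -(2 * x))
    · filter_upwards [hev] with x hx
      have h := ((hdf x hx.1).rpow_const (p := m - 1)
        (Or.inl (ne_of_gt (hfpos x hx.1))))
      have e : m - 1 - 1 = m - 2 := by ring
      rw [e] at h
      exact h.congr_deriv (by ring)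
    · filter_upwards [hev] with x hx
      have h : HasDerivAt (fun y : ℝ => ξ₀ ^ 2 - y ^ 2)
          (0 - 2 * x ^ 1) x := (hasDerivAt_const x (ξ₀ ^ 2)).sub
        (by simpa using (hasDerivAt_pow 2 x))
      convert h using 1
      ring
    · filter_upwards [hev] with x hx
      have : (0:ℝ) < 2 * x := by linarith [hx.2]
      exact neg_ne_zero.mpr (ne_of_gt this)
    · have h0 : Tendsto (fun ξ => f ξ ^ (m - 1)) (𝓝[<] ξ₀) (𝓝 ((0:ℝ) ^ (m-1))) :=
        hf0.rpow_const (Or.inr (by linarith))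
      rwa [Real.zero_rpow (by linarith : m - 1 ≠ 0)] at h0
    · have : Tendsto (fun x : ℝ => ξ₀ ^ 2 - x ^ 2) (𝓝[<] ξ₀) (𝓝 (ξ₀ ^ 2 - ξ₀ ^ 2)) :=
        ((continuous_const.sub (continuous_pow 2)).tendsto ξ₀).mono_left
          nhdsWithin_le_nhds
      simpa using this
    · have h := hslope.const_mul (-(m - 1) / (2 * m))
      have heq : ∀ᶠ x in 𝓝[<] ξ₀,
          (-(m - 1) / (2 * m)) * (m * f x ^ (m - 2) * deriv f x / x)
            = (m - 1) * f x ^ (m - 2) * deriv f x / (-(2 * x)) := by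
        filter_upwards [hev] with x hx
        have hx0 : x ≠ 0 := ne_of_gt hx.2
        field_simp
      have := h.congr' heq
      convert this using 2
      ring
  refine ⟨h1, ?_⟩
  -- Part 2
  have heq2 : ∀ᶠ x in 𝓝[<] ξ₀,
      (m * f x ^ (m - 2) * deriv f x / x) * (x * f x)
        = deriv (fun y => f y ^ m) x := by
    filter_upwards [hev] with x hx
    have hfx : 0 < f x := hfpos x hx.1
    have h := ((hdf x hx.1).rpow_const (p := m)
      (Or.inl (ne_of_gt hfx))).deriv
    rw [h]
    have hsplit : f x ^ (m - 1) = f x ^ (m - 2) * f x := by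
      rw [← Real.rpow_add_one (ne_of_gt hfx) (m - 2)]
      ring_nf
    rw [hsplit]
    have hx0 : x ≠ 0 := ne_of_gt hx.2
    field_simp
  have hx0 : Tendsto (fun x : ℝ => x * f x) (𝓝[<] ξ₀) (𝓝 (ξ₀ * 0)) :=
    (tendsto_id.mono_left nhdsWithin_le_nhds).mul hf0
  have h := hslope.mul hx0
  rw [show (-β) * (ξ₀ * 0) = 0 by ring] at h
  exact h.congr' heq2
end
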